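/- arXiv:2304.09071 — 4 statements merged into one kernel-verified Lean document; each statement's English description precedes it below -/
import Mathlib

section
/- Let $K/\mathbb{Q}$ be a number field of degree $\delta$ generated by an algebraic integer $\alpha$ with minimal polynomial $m_\alpha(x)=b_0+b_1x+\cdots+b_{\delta-1}x^{\delta-1}+x^\delta\in\mathbb{Z}[x]$, and let $S=\max\{|b_i| : 0\le i\le \delta-1\}$. If $y=\sum_{i=0}^{\delta-1} z_i\alpha^i$ with $z_i\in\mathbb{Z}$ and $|z_i|<M$ for every $i$, then $|N_{K/\mathbb{Q}}(y)|\le \delta^{\delta/2}(1+S)^{(\delta-1)\delta/2}(M-1)^\delta$. -/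
open Polynomial Finset Matrix
lemma hadamard_det_le {n : ℕ} (A : Matrix (Fin n) (Fin n) ℝ) :
    |A.det| ≤ ∏ i : Fin n, Real.sqrt (∑ j : Fin n, A i j ^ 2) := by
  classical
  haveI : Fact (Module.finrank ℝ (EuclideanSpace ℝ (Fin n)) = n) := ⟨finrank_euclideanSpace_fin⟩
  set b := EuclideanSpace.basisFun (Fin n) ℝ with hb
  set o := b.toBasis.orientation with ho
  set v : Fin n → EuclideanSpace ℝ (Fin n) := fun i => (WithLp.equiv 2 (Fin n → ℝ)).symm (A i) with hvdef
  have hv : ∀ i j, v i j = A i j := fun i j => rfl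
  have h1 : o.volumeForm v = b.toBasis.det v := by
    rw [o.volumeForm_robust b rfl]
  have h2 : b.toBasis.det v = A.det := by
    rw [Module.Basis.det_apply, ← Matrix.det_transpose]
    congr 1
  calc |A.det| = |o.volumeForm v| := by rw [h1, h2]
    _ ≤ ∏ i, ‖v i‖ := o.abs_volumeForm_apply_le v
    _ = ∏ i, Real.sqrt (∑ j, A i j ^ 2) := by
        refine Finset.prod_congr rfl fun i _ => ?_
        rw [EuclideanSpace.norm_eq]
        congr 1
        refine Finset.sum_congr rfl fun j _ => ?_
        rw [hv, Real.norm_eq_abs, sq_abs]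
open Polynomial Finset

lemma modpow_succ (m : Polynomial ℤ) (hm : m.Monic) {δ : ℕ} (hδm : m.natDegree = δ)
    (hδ0 : 0 < δ) (k : ℕ) :
    X ^ (k+1) %ₘ m = X * (X ^ k %ₘ m) - ((X ^ k %ₘ m).coeff (δ-1)) • m := by
  have hdm : m.degree = (δ : ℕ) := by
    rw [Polynomial.degree_eq_natDegree hm.ne_zero, hδm]
  set r := X ^ k %ₘ m with hr
  set e := r.coeff (δ-1) with he
  have hdr : r.degree < (δ : ℕ) := by rw [← hdm]; exact Polynomial.degree_modByMonic_lt _ hm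
  have key : (X * r - e • m).degree < (δ : WithBot ℕ) := by
    rw [Polynomial.degree_lt_iff_coeff_zero]
    intro t ht
    obtain ⟨s, rfl⟩ := Nat.exists_eq_succ_of_ne_zero (by omega : t ≠ 0)
    rw [Polynomial.coeff_sub, Polynomial.coeff_smul, Polynomial.coeff_X_mul, smul_eq_mul]
    rcases eq_or_lt_of_le ht with h | h
    · have hmc : m.coeff (s+1) = 1 := by
        have hnd : m.natDegree = s+1 := by omega
        rw [← hnd]; exact hm.coeff_natDegree
      have hse : r.coeff s = e := by rw [he]; congr 1; omega
      rw [hmc, mul_one, hse, sub_self]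
    · have h1 : r.coeff s = 0 := by
        apply Polynomial.coeff_eq_zero_of_degree_lt
        exact lt_of_lt_of_le hdr (by exact_mod_cast by omega)
      have h2 : m.coeff (s+1) = 0 := by
        apply Polynomial.coeff_eq_zero_of_natDegree_lt; omega
      rw [h1, h2, mul_zero, sub_zero]
  have hdvd1 : (e • m) %ₘ m = 0 := by
    rw [Polynomial.modByMonic_eq_zero_iff_dvd hm, Polynomial.smul_eq_C_mul]
    exact dvd_mul_left m (C e)
  have hx : (X:Polynomial ℤ) ^ (k+1) = X * r + m * (X * (X ^ k /ₘ m)) := by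
    have h := Polynomial.modByMonic_add_div (X ^ k) m
    calc (X:Polynomial ℤ)^(k+1) = X * (X^k) := by ring
      _ = X * (X ^ k %ₘ m + m * (X ^ k /ₘ m)) := by rw [h]
      _ = X * r + m * (X * (X ^ k /ₘ m)) := by rw [← hr]; ring
  rw [hx, Polynomial.add_modByMonic]
  have h0 : (m * (X * (X ^ k /ₘ m))) %ₘ m = 0 := by
    rw [Polynomial.modByMonic_eq_zero_iff_dvd hm]
    exact Dvd.intro _ rfl
  rw [h0, add_zero]
  have hxr : X * r = (X * r - e • m) + e • m := by ring
  rw [hxr, Polynomial.add_modByMonic, hdvd1, add_zero,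
    (Polynomial.modByMonic_eq_self_iff hm).mpr (by rw [hdm]; exact key)]
  ring

lemma sum_abs_coeff_bound (m : Polynomial ℤ) (hm : m.Monic) {δ : ℕ} (hδm : m.natDegree = δ)
    (hδ0 : 0 < δ) (S : ℤ) (hS : ∀ i < δ, |m.coeff i| ≤ S) :
    ∀ (j t : ℕ), (∑ i ∈ range δ, |(X ^ (i + j) %ₘ m).coeff t|) ≤ (1 + S) ^ j := by
  have hS0 : 0 ≤ S := le_trans (abs_nonneg _) (hS 0 hδ0)
  have hdm : m.degree = (δ : ℕ) := by
    rw [Polynomial.degree_eq_natDegree hm.ne_zero, hδm]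
  have hcz : ∀ (k t : ℕ), δ ≤ t → (X ^ k %ₘ m : Polynomial ℤ).coeff t = 0 := by
    intro k t ht
    apply Polynomial.coeff_eq_zero_of_degree_lt
    exact lt_of_lt_of_le (hdm ▸ Polynomial.degree_modByMonic_lt _ hm) (by exact_mod_cast ht)
  intro j
  induction j with
  | zero =>
    intro t
    have hself : ∀ i < δ, (X ^ i %ₘ m : Polynomial ℤ) = X ^ i := by
      intro i hi
      rw [Polynomial.modByMonic_eq_self_iff hm, Polynomial.degree_X_pow, hdm]
      exact_mod_cast hi
    calc (∑ i ∈ range δ, |(X ^ (i+0) %ₘ m).coeff t|)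
        = ∑ i ∈ range δ, if t = i then 1 else 0 := by
          refine Finset.sum_congr rfl fun i hi => ?_
          rw [add_zero, hself i (mem_range.mp hi), Polynomial.coeff_X_pow]
          split <;> simp
      _ ≤ 1 := by rw [Finset.sum_ite_eq]; split <;> norm_num
      _ = (1+S)^0 := by rw [pow_zero]
  | succ j ih =>
    intro t
    by_cases ht : t < δ
    · have hrec : ∀ i ∈ range δ, |(X ^ (i + (j+1)) %ₘ m).coeff t|
          ≤ |(X ^ (i+j) %ₘ m).coeff (t-1)| * (if t = 0 then 0 else 1)
            + S * |(X ^ (i+j) %ₘ m).coeff (δ-1)| := by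
        intro i _
        have : i + (j+1) = (i+j) + 1 := by omega
        rw [this, modpow_succ m hm hδm hδ0 (i+j), Polynomial.coeff_sub,
          Polynomial.coeff_smul, smul_eq_mul]
        rcases Nat.eq_zero_or_pos t with rfl | htpos
        · rw [Polynomial.mul_coeff_zero, Polynomial.coeff_X_zero, zero_mul, zero_sub, abs_neg,
            abs_mul, if_pos rfl, mul_zero, zero_add, mul_comm]
          exact mul_le_mul_of_nonneg_right (hS 0 hδ0) (abs_nonneg _)
        · obtain ⟨s, rfl⟩ := Nat.exists_eq_succ_of_ne_zero (Nat.pos_iff_ne_zero.mp htpos)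
          rw [Polynomial.coeff_X_mul, if_neg (Nat.succ_ne_zero s), mul_one]
          calc |(X ^ (i+j) %ₘ m).coeff s - (X ^ (i+j) %ₘ m).coeff (δ-1) * m.coeff (s+1)|
              ≤ |(X ^ (i+j) %ₘ m).coeff s| + |(X ^ (i+j) %ₘ m).coeff (δ-1)| * |m.coeff (s+1)| := by
                refine (abs_sub _ _).trans ?_
                rw [abs_mul]
            _ ≤ |(X ^ (i+j) %ₘ m).coeff (s+1-1)| + S * |(X ^ (i+j) %ₘ m).coeff (δ-1)| := by
                rw [Nat.add_sub_cancel]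
                have := hS (s+1) ht
                nlinarith [abs_nonneg ((X ^ (i+j) %ₘ m).coeff (δ-1)),
                  abs_nonneg ((X ^ (i+j) %ₘ m).coeff s), abs_nonneg (m.coeff (s+1))]
      calc (∑ i ∈ range δ, |(X ^ (i + (j+1)) %ₘ m).coeff t|)
          ≤ ∑ i ∈ range δ, (|(X ^ (i+j) %ₘ m).coeff (t-1)| * (if t = 0 then 0 else 1)
              + S * |(X ^ (i+j) %ₘ m).coeff (δ-1)|) := Finset.sum_le_sum hrec
        _ = (∑ i ∈ range δ, |(X ^ (i+j) %ₘ m).coeff (t-1)|) * (if t = 0 then 0 else 1)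
              + S * ∑ i ∈ range δ, |(X ^ (i+j) %ₘ m).coeff (δ-1)| := by
            rw [Finset.sum_add_distrib, ← Finset.sum_mul, Finset.mul_sum]
        _ ≤ (1+S)^j * 1 + S * (1+S)^j := by
            have h1 := ih (t-1)
            have h2 := ih (δ-1)
            have hp : (0:ℤ) ≤ (1+S)^j := pow_nonneg (by linarith) j
            have hs0 : (0:ℤ) ≤ ∑ i ∈ range δ, |(X ^ (i+j) %ₘ m).coeff (t-1)| :=
              Finset.sum_nonneg fun _ _ => abs_nonneg _
            split <;> nlinarith
        _ = (1+S)^(j+1) := by ring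
    · have : ∀ i ∈ range δ, |(X ^ (i + (j+1)) %ₘ m).coeff t| = 0 := by
        intro i _
        rw [hcz _ t (by omega), abs_zero]
      rw [Finset.sum_congr rfl this, Finset.sum_const_zero]
      positivity

/-- Lemma 1 of the paper: if `K = ℚ(α)` has degree `δ`, `α` is an algebraic
integer with minimal polynomial `m_α = b₀ + b₁x + ⋯ + b_{δ-1}x^{δ-1} + x^δ`,
`S ≥ |bᵢ|` for all `i < δ`, and `y = ∑ zᵢ αⁱ` with `|zᵢ| < M`, then
`|N_{K/ℚ}(y)| ≤ δ^{δ/2} (1+S)^{(δ-1)δ/2} (M-1)^δ`. -/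
theorem norm_bound_of_coeff_bound
    (K : Type*) [Field K] [NumberField K] (δ : ℕ)
    (α : NumberField.RingOfIntegers K)
    (hgen : Algebra.adjoin ℚ {(α : K)} = ⊤)
    (hδ : Module.finrank ℚ K = δ)
    (S : ℤ) (hS : ∀ i < δ, |(minpoly ℤ (α : K)).coeff i| ≤ S)
    (M : ℤ) (z : Fin δ → ℤ) (hz : ∀ i, |z i| < M)
    (y : K) (hy : y = ∑ i : Fin δ, (z i : K) * (α : K) ^ (i : ℕ)) :
    |(Algebra.norm ℚ y : ℚ)| ≤
      Real.sqrt δ ^ δ * ((1 + S : ℝ)) ^ ((δ - 1) * δ / 2) * ((M : ℝ) - 1) ^ δ := by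
  classical
  have hδ0 : 0 < δ := hδ ▸ Module.finrank_pos
  have hintZ : IsIntegral ℤ (α : K) := α.isIntegral_coe
  have hintQ : IsIntegral ℚ (α : K) := hintZ.tower_top
  set m : Polynomial ℤ := minpoly ℤ (α : K) with hmdef
  have hmon : m.Monic := minpoly.monic hintZ
  have hS0 : 0 ≤ S := le_trans (abs_nonneg _) (hS 0 hδ0)
  have hM1 : (0:ℤ) ≤ M - 1 := by
    have := hz ⟨0, hδ0⟩
    have := abs_nonneg (z ⟨0, hδ0⟩)
    omega
  -- power basis
  let e : Algebra.adjoin ℚ {(α:K)} ≃ₐ[ℚ] K :=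
    (Subalgebra.equivOfEq _ ⊤ hgen).trans Subalgebra.topEquiv
  let pb : PowerBasis ℚ K := (Algebra.adjoin.powerBasis hintQ).map e
  have hpbgen : pb.gen = (α : K) := rfl
  have hpbdim : pb.dim = δ := by rw [← pb.finrank, hδ]
  have hmdeg : m.natDegree = δ := by
    have h1 : (minpoly ℚ (α:K)).natDegree = pb.dim := by
      rw [← hpbgen]; exact pb.natDegree_minpoly
    have h2 : minpoly ℚ (α:K) = m.map (algebraMap ℤ ℚ) :=
      minpoly.isIntegrallyClosed_eq_field_fractions' ℚ hintZ
    rw [h2, hmon.natDegree_map] at h1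
    rw [h1, hpbdim]
  -- the basis 1, α, ..., α^(δ-1)
  let bK : Module.Basis (Fin δ) ℚ K := pb.basis.reindex (finCongr hpbdim)
  have hbK : ∀ t : Fin δ, bK t = (α:K) ^ (t:ℕ) := by
    intro t
    simp only [bK, Module.Basis.reindex_apply, PowerBasis.coe_basis, hpbgen, finCongr_symm_apply,
      Fin.coe_cast]
  -- powers of α in terms of the basis
  have hpow : ∀ k : ℕ, (α:K)^k = ∑ t ∈ range δ, ((X^k %ₘ m).coeff t : K) * (α:K)^t := by
    intro k
    have haev : Polynomial.aeval (α:K) m = 0 := minpoly.aeval ℤ (α:K)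
    have h1 : (Polynomial.aeval (α:K)) (X^k %ₘ m) = (α:K)^k := by
      calc (Polynomial.aeval (α:K)) (X^k %ₘ m)
          = Polynomial.aeval (α:K) (X^k %ₘ m) +
            Polynomial.aeval (α:K) m * Polynomial.aeval (α:K) (X^k /ₘ m) := by
            rw [haev]; ring
        _ = Polynomial.aeval (α:K) (X^k %ₘ m + m * (X^k /ₘ m)) := by rw [map_add, _root_.map_mul]
        _ = Polynomial.aeval (α:K) (X^k) := by rw [Polynomial.modByMonic_add_div (X^k) m]
        _ = (α:K)^k := by simp
    have hnd : (X^k %ₘ m).natDegree < δ := by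
      rw [← hmdeg]
      refine Polynomial.natDegree_modByMonic_lt _ hmon ?_
      intro h1
      rw [h1] at hmdeg
      simp [Polynomial.natDegree_one] at hmdeg
      omega
    rw [← h1, Polynomial.aeval_eq_sum_range' hnd]
    refine Finset.sum_congr rfl fun t _ => ?_
    rw [zsmul_eq_mul]
  -- the matrix
  let A : Matrix (Fin δ) (Fin δ) ℤ :=
    Matrix.of fun t j : Fin δ => ∑ i : Fin δ, z i * ((X^((i:ℕ)+(j:ℕ)) %ₘ m).coeff (t:ℕ))
  have hAdef : ∀ t j : Fin δ,
      A t j = ∑ i : Fin δ, z i * ((X^((i:ℕ)+(j:ℕ)) %ₘ m).coeff (t:ℕ)) := fun _ _ => rfl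
  -- multiplication identity
  have hid : ∀ j : Fin δ, y * (α:K)^(j:ℕ) = ∑ t : Fin δ, ((A t j : ℚ)) • bK t := by
    intro j
    have hterm : ∀ i : Fin δ, (z i : K) * (α:K)^(i:ℕ) * (α:K)^(j:ℕ)
        = ∑ t : Fin δ, ((z i * ((X^((i:ℕ)+(j:ℕ)) %ₘ m).coeff (t:ℕ)) : ℤ) : K) * (α:K)^(t:ℕ) := by
      intro i
      rw [mul_assoc, ← pow_add, hpow ((i:ℕ)+(j:ℕ)), Finset.mul_sum,
        ← Fin.sum_univ_eq_sum_range
          (fun t => ((z i : K)) * (((X^((i:ℕ)+(j:ℕ)) %ₘ m).coeff t : K) * (α:K)^t)) δ]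
      refine Finset.sum_congr rfl fun t _ => ?_
      push_cast
      ring
    rw [hy, Finset.sum_mul, Finset.sum_congr rfl (fun i _ => hterm i), Finset.sum_comm]
    refine Finset.sum_congr rfl fun t _ => ?_
    rw [hbK t, hAdef t j, Int.cast_smul_eq_zsmul ℚ, zsmul_eq_mul, ← Finset.sum_mul]
    congr 1
    push_cast
    ring
  -- the left multiplication matrix
  have hLM : (Algebra.leftMulMatrix bK) y = A.map (Int.cast : ℤ → ℚ) := by
    ext t j
    rw [Algebra.leftMulMatrix_eq_repr_mul, hbK j, hid j, Matrix.map_apply]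
    exact congrFun (bK.repr_sum_self fun t => ((A t j : ℚ))) t
  have hnormdet : |(Algebra.norm ℚ y : ℚ)| = |((A.det : ℤ) : ℚ)| := by
    rw [Algebra.norm_eq_matrix_det bK y, hLM]
    congr 1
    rw [show A.map (Int.cast : ℤ → ℚ) = (Int.castRingHom ℚ).mapMatrix A from rfl,
      ← RingHom.map_det]
    rfl
  -- entry bounds
  have hentry : ∀ t j : Fin δ, |A t j| ≤ (M-1) * (1+S)^(j:ℕ) := by
    intro t j
    rw [hAdef t j]
    calc |∑ i : Fin δ, z i * ((X^((i:ℕ)+(j:ℕ)) %ₘ m).coeff (t:ℕ))|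
        ≤ ∑ i : Fin δ, |z i * ((X^((i:ℕ)+(j:ℕ)) %ₘ m).coeff (t:ℕ))| :=
          Finset.abs_sum_le_sum_abs _ _
      _ ≤ ∑ i : Fin δ, (M-1) * |((X^((i:ℕ)+(j:ℕ)) %ₘ m).coeff (t:ℕ))| := by
          refine Finset.sum_le_sum fun i _ => ?_
          rw [abs_mul]
          have h1 : |z i| ≤ M - 1 := by have := hz i; omega
          exact mul_le_mul_of_nonneg_right h1 (abs_nonneg _)
      _ = (M-1) * ∑ i : Fin δ, |((X^((i:ℕ)+(j:ℕ)) %ₘ m).coeff (t:ℕ))| := by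
          rw [Finset.mul_sum]
      _ ≤ (M-1) * (1+S)^(j:ℕ) := by
          refine mul_le_mul_of_nonneg_left ?_ hM1
          rw [Fin.sum_univ_eq_sum_range (fun i => |((X^(i+(j:ℕ)) %ₘ m).coeff (t:ℕ))|) δ]
          exact sum_abs_coeff_bound m hmon hmdeg hδ0 S hS (j:ℕ) (t:ℕ)
  -- pass to ℝ and apply Hadamard
  have hcast : ((|(Algebra.norm ℚ y : ℚ)| : ℚ) : ℝ) = |((A.det : ℤ) : ℝ)| := by
    rw [hnormdet]
    push_cast
    simp only [Matrix.map_map, Function.comp_def, Rat.cast_intCast]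
  rw [hcast]
  have hdetT : ((A.det : ℤ) : ℝ) = ((A.map (Int.cast : ℤ → ℝ))ᵀ).det := by
    rw [Matrix.det_transpose, show A.map (Int.cast : ℤ → ℝ) = (Int.castRingHom ℝ).mapMatrix A from rfl,
      ← RingHom.map_det]
    rfl
  rw [hdetT]
  have hb : ∀ j t : Fin δ, |(A.map (Int.cast : ℤ → ℝ))ᵀ j t| ≤ ((M:ℝ)-1) * (1+(S:ℝ))^(j:ℕ) := by
    intro j t
    have := hentry t j
    rw [Matrix.transpose_apply, Matrix.map_apply]
    calc |((A t j : ℤ) : ℝ)| = ((|A t j| : ℤ) : ℝ) := by push_cast; ring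
      _ ≤ (((M-1) * (1+S)^(j:ℕ) : ℤ) : ℝ) := by exact_mod_cast this
      _ = ((M:ℝ)-1) * (1+(S:ℝ))^(j:ℕ) := by push_cast; ring
  have hEnn : ∀ j : Fin δ, (0:ℝ) ≤ ((M:ℝ)-1) * (1+(S:ℝ))^(j:ℕ) := by
    intro j
    have h1 : (0:ℝ) ≤ (M:ℝ)-1 := by exact_mod_cast hM1
    have h2 : (0:ℝ) ≤ (1+(S:ℝ)) := by
      have : (0:ℝ) ≤ (S:ℝ) := by exact_mod_cast hS0
      linarith
    positivity
  calc |((A.map (Int.cast : ℤ → ℝ))ᵀ).det|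
      ≤ ∏ j : Fin δ, Real.sqrt (∑ t : Fin δ, ((A.map (Int.cast : ℤ → ℝ))ᵀ j t) ^ 2) :=
        hadamard_det_le _
    _ ≤ ∏ j : Fin δ, Real.sqrt δ * (((M:ℝ)-1) * (1+(S:ℝ))^(j:ℕ)) := by
        refine Finset.prod_le_prod (fun j _ => Real.sqrt_nonneg _) fun j _ => ?_
        have hsum : ∑ t : Fin δ, ((A.map (Int.cast : ℤ → ℝ))ᵀ j t) ^ 2
            ≤ (δ:ℝ) * (((M:ℝ)-1) * (1+(S:ℝ))^(j:ℕ))^2 := by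
          calc ∑ t : Fin δ, ((A.map (Int.cast : ℤ → ℝ))ᵀ j t) ^ 2
              ≤ ∑ _t : Fin δ, (((M:ℝ)-1) * (1+(S:ℝ))^(j:ℕ))^2 := by
                refine Finset.sum_le_sum fun t _ => ?_
                have h1 := abs_le.mp (hb j t)
                exact sq_le_sq' h1.1 h1.2
            _ = (δ:ℝ) * (((M:ℝ)-1) * (1+(S:ℝ))^(j:ℕ))^2 := by
                rw [Finset.sum_const, Finset.card_univ, Fintype.card_fin, nsmul_eq_mul]
        calc Real.sqrt (∑ t : Fin δ, ((A.map (Int.cast : ℤ → ℝ))ᵀ j t) ^ 2)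
            ≤ Real.sqrt ((δ:ℝ) * (((M:ℝ)-1) * (1+(S:ℝ))^(j:ℕ))^2) := Real.sqrt_le_sqrt hsum
          _ = Real.sqrt δ * (((M:ℝ)-1) * (1+(S:ℝ))^(j:ℕ)) := by
              rw [Real.sqrt_mul (by positivity), Real.sqrt_sq (hEnn j)]
    _ = Real.sqrt δ ^ δ * ((1 + (S:ℝ))) ^ ((δ - 1) * δ / 2) * ((M : ℝ) - 1) ^ δ := by
        rw [Finset.prod_mul_distrib, Finset.prod_const, Finset.card_univ, Fintype.card_fin]
        rw [Finset.prod_mul_distrib, Finset.prod_const, Finset.card_univ, Fintype.card_fin]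
        rw [Finset.prod_pow_eq_pow_sum]
        have hsum : ∑ j : Fin δ, (j:ℕ) = (δ - 1) * δ / 2 := by
          rw [Fin.sum_univ_eq_sum_range (fun j => j) δ, Finset.sum_range_id]
          cases δ <;> simp [Nat.mul_comm]
        rw [hsum]
        ring
end

section
/- Let $\alpha$ be an algebraic integer of degree $\delta$ with minimal polynomial having coefficients bounded in absolute value by $S$ (excluding the leading coefficient $1$). Let $M>1$ be an integer and $y=\sum_{i=0}^{\delta-1}z_i\alpha^i$ with $|z_i|<M$ for all $i$. Then for every $j\ge 1$, the coefficients $c_0,\ldots,c_{\delta-1}\in\mathbb{Z}$ in the expansion $y\cdot\alpha^{j-1}=\sum_{i=0}^{\delta-1}c_i\alpha^i$ satisfy $|c_i|\le (M-1)(1+S)^{j-1}$. -/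
open Polynomial Finset

/-- The inductive claim in Lemma 1 of the paper: if `α` is an algebraic integer
of degree `δ` whose minimal polynomial has nonleading coefficients bounded by `S`,
`M > 1`, and `y = ∑ zᵢαⁱ` with `|zᵢ| < M`, then for `j ≥ 1` the integer
coefficients `cᵢ` of `y·α^{j-1} = ∑ cᵢ αⁱ` satisfy `|cᵢ| ≤ (M-1)(1+S)^{j-1}`. -/
theorem coeff_bound_mul_pow
    (K : Type*) [Field K] [CharZero K] (δ : ℕ)
    (α : K) (hint : IsIntegral ℤ α)
    (hdeg : (minpoly ℤ α).natDegree = δ)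
    (S : ℤ) (hS : ∀ i < δ, |(minpoly ℤ α).coeff i| ≤ S)
    (M : ℤ) (hM : 1 < M)
    (z : Fin δ → ℤ) (hz : ∀ i, |z i| < M)
    (j : ℕ) (hj : 1 ≤ j)
    (c : Fin δ → ℤ)
    (hc : (∑ i : Fin δ, (z i : K) * α ^ (i : ℕ)) * α ^ (j - 1) =
        ∑ i : Fin δ, (c i : K) * α ^ (i : ℕ)) :
    ∀ i : Fin δ, |c i| ≤ (M - 1) * (1 + S) ^ (j - 1) := by
  have hδ : 0 < δ := hdeg ▸ minpoly.natDegree_pos hint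
  have hS0 : 0 ≤ S := le_trans (abs_nonneg _) (hS 0 hδ)
  set a : ℕ → ℤ := (minpoly ℤ α).coeff with ha
  -- power relation
  have hpow : (α : K) ^ δ = -∑ i ∈ Finset.range δ, (a i : K) * α ^ i := by
    have hlead : a δ = 1 := by
      have h := (minpoly.monic hint).coeff_natDegree
      rwa [hdeg] at h
    have h := minpoly.aeval ℤ α
    rw [Polynomial.aeval_eq_sum_range, hdeg, Finset.sum_range_succ, ← ha, hlead] at h
    have h' : (∑ i ∈ Finset.range δ, (a i : K) * α ^ i) + α ^ δ = 0 := by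
      simpa [zsmul_eq_mul] using h
    exact eq_neg_of_add_eq_zero_right h'
  -- uniqueness of coefficients
  have huniq : ∀ d : ℕ → ℤ, (∑ i ∈ Finset.range δ, (d i : K) * α ^ i) = 0 →
      ∀ i < δ, d i = 0 := by
    intro d hd i0 hi0
    by_contra hd0
    set p : ℚ[X] := ∑ i ∈ Finset.range δ, Polynomial.C ((d i : ℚ)) * Polynomial.X ^ i with hp
    have hco : ∀ n, n < δ → p.coeff n = (d n : ℚ) := by
      intro n hn
      rw [hp, Polynomial.finset_sum_coeff]
      simp only [Polynomial.coeff_C_mul, Polynomial.coeff_X_pow, mul_ite, mul_one, mul_zero]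
      rw [Finset.sum_ite_eq (Finset.range δ) n fun i => ((d i : ℚ))]
      simp [hn]
    have hco' : ∀ n, δ ≤ n → p.coeff n = 0 := by
      intro n hn
      rw [hp, Polynomial.finset_sum_coeff]
      apply Finset.sum_eq_zero
      intro i hi
      have : n ≠ i := by
        rintro rfl
        exact absurd (Finset.mem_range.mp hi) (not_lt.mpr hn)
      simp [Polynomial.coeff_C_mul, Polynomial.coeff_X_pow, this]
    have hpne : p ≠ 0 := by
      intro h0
      apply hd0
      have h1 := hco i0 hi0
      rw [h0, Polynomial.coeff_zero] at h1
      exact_mod_cast h1.symm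
    have hav : (Polynomial.aeval α) p = 0 := by
      rw [hp, map_sum, ← hd]
      refine Finset.sum_congr rfl fun i _ => ?_
      rw [map_mul, Polynomial.aeval_C, map_pow, Polynomial.aeval_X,
        eq_ratCast (algebraMap ℚ K), Rat.cast_intCast]
    have hdlt : p.degree < (δ : ℕ) := by
      rw [Polynomial.degree_lt_iff_coeff_zero]
      intro m hm
      exact hco' m (by exact_mod_cast hm)
    have hQdeg : (minpoly ℚ α).natDegree = δ := by
      rw [minpoly.isIntegrallyClosed_eq_field_fractions' ℚ hint,
        (minpoly.monic hint).natDegree_map]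
      exact hdeg
    have hle := minpoly.degree_le_of_ne_zero ℚ α hpne hav
    have : (δ : WithBot ℕ) ≤ p.degree := by
      calc (δ : WithBot ℕ) = (minpoly ℚ α).natDegree := by exact_mod_cast hQdeg.symm
        _ ≤ (minpoly ℚ α).degree := Polynomial.degree_eq_natDegree (minpoly.ne_zero (hint.tower_top (A := ℚ))) ▸ le_rfl
        _ ≤ p.degree := hle
    exact absurd (lt_of_le_of_lt this hdlt) (lt_irrefl _)
  -- the shift-and-reduce step
  set step : (ℕ → ℤ) → (ℕ → ℤ) :=
    fun d i => (if i = 0 then 0 else d (i - 1)) - d (δ - 1) * a i with hstep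
  obtain ⟨e, rfl⟩ : ∃ e, δ = e + 1 := ⟨δ - 1, (Nat.succ_pred_eq_of_pos hδ).symm⟩
  have hmul : ∀ d : ℕ → ℤ,
      (∑ i ∈ Finset.range (e + 1), (d i : K) * α ^ i) * α
        = ∑ i ∈ Finset.range (e + 1), (step d i : K) * α ^ i := by
    intro d
    have hR : ∀ i : ℕ, ((step d i : ℤ) : K) * α ^ i
        = (if i = 0 then (0 : K) else (d (i - 1) : K) * α ^ i)
          - (d e : K) * ((a i : K) * α ^ i) := by
      intro i
      simp only [hstep, Nat.add_sub_cancel]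
      push_cast [apply_ite (fun x : ℤ => (x : K))]
      split_ifs <;> ring
    simp_rw [hR]
    rw [Finset.sum_sub_distrib]
    rw [Finset.sum_range_succ' (fun i => if i = 0 then (0:K) else (d (i-1) : K) * α ^ i) e]
    simp only [if_pos rfl, Nat.succ_ne_zero, if_neg (Nat.succ_ne_zero _), Nat.add_sub_cancel,
      add_zero]
    have hsum : ∑ i ∈ Finset.range (e + 1), (a i : K) * α ^ i = -α ^ (e + 1) := by
      rw [hpow]; ring
    rw [← Finset.mul_sum, hsum]
    rw [Finset.sum_mul, Finset.sum_range_succ]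
    have : ∀ i : ℕ, (d i : K) * α ^ i * α = (d i : K) * α ^ (i + 1) := by
      intro i; rw [mul_assoc, ← pow_succ]
    simp_rw [this]
    simp only [if_true, if_false]
    ring
  -- one-step bound
  have hbd : ∀ (d : ℕ → ℤ) (B : ℤ), 0 ≤ B → (∀ i < e + 1, |d i| ≤ B) →
      ∀ i < e + 1, |step d i| ≤ B * (1 + S) := by
    intro d B hB hd i hi
    have h1 : |(if i = 0 then 0 else d (i - 1))| ≤ B := by
      split_ifs with h
      · simpa using hB
      · exact hd _ (lt_of_le_of_lt (Nat.sub_le i 1) hi)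
    have h2 : |d (e + 1 - 1) * a i| ≤ B * S := by
      rw [abs_mul]
      exact mul_le_mul (hd _ (by omega)) (hS i hi) (abs_nonneg _) hB
    calc |step d i| ≤ |(if i = 0 then 0 else d (i - 1))| + |d (e + 1 - 1) * a i| :=
          abs_sub _ _
      _ ≤ B + B * S := add_le_add h1 h2
      _ = B * (1 + S) := by ring
  -- extend z to ℕ
  set b : ℕ → ℤ := fun i => if h : i < e + 1 then z ⟨i, h⟩ else 0 with hb
  have hzb : (∑ i : Fin (e + 1), (z i : K) * α ^ (i : ℕ))
      = ∑ i ∈ Finset.range (e + 1), (b i : K) * α ^ i := by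
    rw [← Fin.sum_univ_eq_sum_range (fun i => (b i : K) * α ^ i) (e + 1)]
    refine Finset.sum_congr rfl fun i _ => ?_
    simp [hb, i.isLt, not_lt.mpr (Nat.lt_succ_iff.mp i.isLt)]
  have main : ∀ n : ℕ,
      ((∑ i : Fin (e + 1), (z i : K) * α ^ (i : ℕ)) * α ^ n
        = ∑ i ∈ Finset.range (e + 1), ((step^[n] b) i : K) * α ^ i)
      ∧ ∀ i < e + 1, |(step^[n] b) i| ≤ (M - 1) * (1 + S) ^ n := by
    intro n
    induction n with
    | zero =>
      refine ⟨by simpa using hzb, fun i hi => ?_⟩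
      simp only [Function.iterate_zero, id_eq, pow_zero, mul_one]
      have : |b i| < M := by
        simp only [hb, dif_pos hi]
        exact hz _
      omega
    | succ n ih =>
      constructor
      · rw [pow_succ, ← mul_assoc, ih.1, hmul, Function.iterate_succ_apply']
      · intro i hi
        rw [Function.iterate_succ_apply']
        have hBnn : 0 ≤ (M - 1) * (1 + S) ^ n :=
          mul_nonneg (by omega) (pow_nonneg (by omega) n)
        calc |step (step^[n] b) i| ≤ (M - 1) * (1 + S) ^ n * (1 + S) :=
              hbd _ _ hBnn ih.2 i hi
          _ = (M - 1) * (1 + S) ^ (n + 1) := by ring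
  -- conclude
  obtain ⟨m, rfl⟩ : ∃ m, j = m + 1 := ⟨j - 1, (Nat.succ_pred_eq_of_pos hj).symm⟩
  rw [Nat.add_sub_cancel] at hc ⊢
  intro i
  set cb : ℕ → ℤ := fun i => if h : i < e + 1 then c ⟨i, h⟩ else 0 with hcb
  have hcsum : (∑ i : Fin (e + 1), (c i : K) * α ^ (i : ℕ))
      = ∑ i ∈ Finset.range (e + 1), (cb i : K) * α ^ i := by
    rw [← Fin.sum_univ_eq_sum_range (fun i => (cb i : K) * α ^ i) (e + 1)]
    refine Finset.sum_congr rfl fun i _ => ?_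
    simp [hcb, i.isLt, not_lt.mpr (Nat.lt_succ_iff.mp i.isLt)]
  have hdiff : ∑ i ∈ Finset.range (e + 1), ((cb i - (step^[m] b) i : ℤ) : K) * α ^ i = 0 := by
    push_cast
    simp_rw [sub_mul]
    rw [Finset.sum_sub_distrib, ← hcsum, ← (main m).1, hc, sub_self]
  have hcveq : cb (i : ℕ) = (step^[m] b) (i : ℕ) := by
    have := huniq _ hdiff (i : ℕ) i.isLt
    omega
  have hcval : cb (i : ℕ) = c i := by simp [hcb, i.isLt, not_lt.mpr (Nat.lt_succ_iff.mp i.isLt)]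
  rw [← hcval, hcveq]
  exact (main m).2 (i : ℕ) i.isLt
end

section
/- Let $K$ be a number field of degree $\delta$ with ring of integers $\mathcal{O}_K$, generated by an algebraic integer $\alpha$, and let $C_\alpha=\delta^{\delta/2}(1+S)^{(\delta-1)\delta/2}$ where $S$ bounds the coefficients of the minimal polynomial of $\alpha$. Let $M\ge 1$ and let $\mathcal{R}[M]=\{\sum_{i=0}^{\delta-1}z_i\alpha^i : 0\le z_i<M\}$. Let $\mathfrak{p}_1,\ldots,\mathfrak{p}_n$ be distinct prime ideals of $\mathcal{O}_K$ with $\prod_{i=1}^n N(\mathfrak{p}_i)>C_\alpha(M-1)^\delta$. Then the map $\phi:\mathcal{R}[M]\to\prod_{i=1}^n \mathcal{O}_K/\mathfrak{p}_i$ given by reduction modulo each $\mathfrak{p}_i$ is injective. -/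
open Polynomial Finset NumberField

open Matrix in

-- AM-GM for products
theorem amgm_fin {N : ℕ} (hN : 0 < N) (x : Fin N → ℝ) (hx : ∀ i, 0 ≤ x i) :
    ∏ i, x i ≤ ((∑ i, x i) / N) ^ N := by
  have h := Real.geom_mean_le_arith_mean_weighted Finset.univ (fun _ => (N : ℝ)⁻¹) x
    (fun i _ => by positivity) (by simp [Finset.card_univ]; field_simp)
    (fun i _ => hx i)
  have hprod : ∏ i, x i ^ ((N : ℝ)⁻¹) = (∏ i, x i) ^ ((N:ℝ)⁻¹) := by
    rw [← Real.finset_prod_rpow _ _ (fun i _ => hx i)]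
  rw [hprod] at h
  have h2 : ((∏ i, x i) ^ ((N:ℝ)⁻¹)) ^ N ≤ ((∑ i, (N:ℝ)⁻¹ * x i)) ^ N :=
    pow_le_pow_left₀ (Real.rpow_nonneg (Finset.prod_nonneg fun i _ => hx i) _) h N
  rw [Real.rpow_inv_natCast_pow (Finset.prod_nonneg fun i _ => hx i) hN.ne'] at h2
  calc ∏ i, x i ≤ (∑ i, (N:ℝ)⁻¹ * x i) ^ N := h2
    _ = ((∑ i, x i) / N) ^ N := by rw [← Finset.mul_sum]; ring_nf

open Matrix in
theorem det_le_of_entry_le {N : ℕ} (B : Matrix (Fin N) (Fin N) ℝ) (β : ℝ) (hβ : 0 ≤ β)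
    (hB : ∀ i j, |B i j| ≤ β) : |B.det| ≤ (Real.sqrt N * β) ^ N := by
  rcases Nat.eq_zero_or_pos N with h0 | hN
  · subst h0; simp [Matrix.det_fin_zero]
  set G := B * Bᵀ with hGdef
  have hG : G.PosSemidef := by
    have := Matrix.posSemidef_self_mul_conjTranspose B
    rwa [Matrix.conjTranspose_eq_transpose_of_trivial] at this
  have hH : G.IsHermitian := hG.1
  have hdet : G.det = ∏ i, hH.eigenvalues i := by
    simpa using hH.det_eq_prod_eigenvalues
  have htrace : G.trace = ∑ i, hH.eigenvalues i := by
    nth_rewrite 1 [hH.spectral_theorem]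
    rw [Unitary.conjStarAlgAut_apply]
    rw [Matrix.trace_mul_cycle]
    rw [(Matrix.mem_unitaryGroup_iff').mp (Matrix.IsHermitian.eigenvectorUnitary hH).2]
    simp [Matrix.trace_diagonal]
  have htr_le : G.trace ≤ N * (N * β ^ 2) := by
    have : G.trace = ∑ i, ∑ j, B i j * B i j := by
      simp [Matrix.trace, Matrix.diag, hGdef, Matrix.mul_apply]
    rw [this]
    have hij : ∀ i j, B i j * B i j ≤ β ^ 2 := by
      intro i j
      obtain ⟨h1, h2⟩ := abs_le.mp (hB i j)
      nlinarith
    calc ∑ i, ∑ j, B i j * B i j ≤ ∑ i : Fin N, ∑ j : Fin N, β ^ 2 :=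
          Finset.sum_le_sum fun i _ => Finset.sum_le_sum fun j _ => hij i j
      _ = N * (N * β ^ 2) := by simp [Finset.sum_const]
  have hdetsq : B.det ^ 2 = G.det := by
    rw [hGdef, Matrix.det_mul, Matrix.det_transpose]; ring
  have hgm : G.det ≤ (N * β ^ 2) ^ N := by
    rw [hdet]
    calc ∏ i, hH.eigenvalues i ≤ ((∑ i, hH.eigenvalues i) / N) ^ N :=
          amgm_fin hN _ (fun i => hG.eigenvalues_nonneg i)
      _ ≤ (N * β ^ 2) ^ N := by
          apply pow_le_pow_left₀
          · exact div_nonneg (Finset.sum_nonneg fun i _ => hG.eigenvalues_nonneg i) (Nat.cast_nonneg N)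
          · rw [div_le_iff₀ (by exact_mod_cast hN)]
            calc (∑ i, hH.eigenvalues i) = G.trace := htrace.symm
              _ ≤ N * (N * β^2) := htr_le
              _ = N * β ^ 2 * N := by ring
  have key : B.det ^ 2 ≤ ((Real.sqrt N * β) ^ N) ^ 2 := by
    rw [hdetsq]
    calc G.det ≤ (N * β^2)^N := hgm
      _ = ((Real.sqrt N * β) ^ 2) ^ N := by
          congr 1
          rw [mul_pow, Real.sq_sqrt (Nat.cast_nonneg N)]
      _ = ((Real.sqrt N * β) ^ N) ^ 2 := by
          rw [← pow_mul, ← pow_mul, mul_comm 2 N]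
  calc |B.det| = Real.sqrt (B.det ^ 2) := (Real.sqrt_sq_eq_abs _).symm
    _ ≤ Real.sqrt (((Real.sqrt N * β) ^ N) ^ 2) := Real.sqrt_le_sqrt key
    _ = |(Real.sqrt N * β) ^ N| := Real.sqrt_sq_eq_abs _
    _ = (Real.sqrt N * β) ^ N := abs_of_nonneg (by positivity)

open Matrix in
theorem det_le_of_row_le {N : ℕ} (A : Matrix (Fin N) (Fin N) ℝ) (β t : ℝ) (hβ : 0 ≤ β)
    (ht : 1 ≤ t) (hA : ∀ i j, |A i j| ≤ β * t ^ (i : ℕ)) :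
    |A.det| ≤ (Real.sqrt N * β) ^ N * t ^ (∑ i : Fin N, (i : ℕ)) := by
  have ht0 : (0:ℝ) < t := lt_of_lt_of_le one_pos ht
  set C : Matrix (Fin N) (Fin N) ℝ := Matrix.of fun i j => (t ^ (i:ℕ))⁻¹ * A i j with hC
  have hAC : A = Matrix.of fun (i j : Fin N) => (t ^ (i:ℕ)) * C i j := by
    ext i j
    simp [hC, Matrix.of_apply]
    field_simp
  have hdet : A.det = (∏ i : Fin N, t ^ (i:ℕ)) * C.det := by
    rw [hAC, Matrix.det_mul_column]
  have hCb : ∀ i j, |C i j| ≤ β := by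
    intro i j
    rw [hC]
    simp only [Matrix.of_apply, abs_mul, abs_inv, abs_pow, abs_of_pos ht0]
    rw [inv_mul_le_iff₀ (by positivity)]
    calc |A i j| ≤ β * t ^ (i:ℕ) := hA i j
      _ = t ^ (i:ℕ) * β := by ring
  have hprod : (∏ i : Fin N, t ^ (i:ℕ)) = t ^ (∑ i : Fin N, (i:ℕ)) :=
    Finset.prod_pow_eq_pow_sum _ _ _
  rw [hdet, abs_mul, abs_of_pos (by positivity), hprod]
  rw [mul_comm]
  exact mul_le_mul_of_nonneg_right (det_le_of_entry_le C β hβ hCb) (by positivity)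

def crtStep (δ : ℕ) (a : ℕ → ℤ) (u : ℕ → ℤ) : ℕ → ℤ :=
  fun k => (if k = 0 ∨ δ ≤ k then 0 else u (k - 1)) - u (δ - 1) * (if k < δ then a k else 0)

def crtVec (δ : ℕ) (a : ℕ → ℤ) (c : ℕ → ℤ) : ℕ → ℕ → ℤ
  | 0 => c
  | j + 1 => crtStep δ a (crtVec δ a c j)

theorem crtVec_bound (δ : ℕ) (a c : ℕ → ℤ) (B S : ℤ) (hB : 0 ≤ B) (hS : 0 ≤ S)
    (hc : ∀ k, |c k| ≤ B) (ha : ∀ k, k < δ → |a k| ≤ S) (j k : ℕ) :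
    |crtVec δ a c j k| ≤ B * (1 + S) ^ j := by
  induction j generalizing k with
  | zero => simpa [crtVec] using hc k
  | succ j ih =>
    have h1 : |(if k = 0 ∨ δ ≤ k then 0 else crtVec δ a c j (k - 1))| ≤ B * (1 + S) ^ j := by
      split
      · simpa using by positivity
      · exact ih _
    have h2 : |(if k < δ then a k else 0)| ≤ S := by
      split
      · exact ha k (by assumption)
      · simpa using hS
    calc |crtVec δ a c (j+1) k| ≤ |(if k = 0 ∨ δ ≤ k then 0 else crtVec δ a c j (k - 1))|
          + |crtVec δ a c j (δ - 1)| * |(if k < δ then a k else 0)| := by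
          rw [show crtVec δ a c (j+1) k = crtStep δ a (crtVec δ a c j) k from rfl, crtStep]
          refine (abs_sub _ _).trans ?_
          rw [abs_mul]
      _ ≤ B * (1 + S) ^ j + (B * (1 + S) ^ j) * S := by
          refine add_le_add h1 ?_
          exact mul_le_mul (ih _) h2 (abs_nonneg _) (by positivity)
      _ = B * (1 + S) ^ (j + 1) := by ring

theorem crtStep_spec {R : Type*} [CommRing R] (δ : ℕ) (hδ : 0 < δ) (a u : ℕ → ℤ) (α : R)
    (hmin : (∑ k ∈ Finset.range δ, a k • α ^ k) = - α ^ δ) :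
    (∑ k ∈ Finset.range δ, crtStep δ a u k • α ^ k) =
      (∑ k ∈ Finset.range δ, u k • α ^ k) * α := by
  obtain ⟨m, rfl⟩ : ∃ m, δ = m + 1 := ⟨δ - 1, (Nat.succ_pred_eq_of_pos hδ).symm⟩
  have hsplit : (∑ k ∈ Finset.range (m+1), crtStep (m+1) a u k • α ^ k) =
      (∑ k ∈ Finset.range (m+1), (if k = 0 ∨ m + 1 ≤ k then 0 else u (k - 1)) • α ^ k)
      - (∑ k ∈ Finset.range (m+1), (u m * (if k < m + 1 then a k else 0)) • α ^ k) := by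
    rw [← Finset.sum_sub_distrib]
    refine Finset.sum_congr rfl fun k hk => ?_
    rw [crtStep]
    simp only [Nat.add_sub_cancel]
    rw [sub_smul]
  have hfirst : (∑ k ∈ Finset.range (m+1), (if k = 0 ∨ m + 1 ≤ k then 0 else u (k - 1)) • α ^ k)
      = ∑ i ∈ Finset.range m, u i • α ^ (i + 1) := by
    rw [Finset.sum_range_succ']
    simp only [Nat.add_sub_cancel]
    have : ∀ i ∈ Finset.range m,
        (if i + 1 = 0 ∨ m + 1 ≤ i + 1 then 0 else u i) • α ^ (i + 1) = u i • α ^ (i+1) := by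
      intro i hi
      rw [Finset.mem_range] at hi
      rw [if_neg (by omega)]
    rw [Finset.sum_congr rfl this]
    simp
  have hsecond : (∑ k ∈ Finset.range (m+1), (u m * (if k < m + 1 then a k else 0)) • α ^ k)
      = - (u m • α ^ (m+1)) := by
    have : ∀ k ∈ Finset.range (m+1),
        (u m * (if k < m + 1 then a k else 0)) • α ^ k = u m • (a k • α ^ k) := by
      intro k hk
      rw [Finset.mem_range] at hk
      rw [if_pos hk, mul_smul]
    rw [Finset.sum_congr rfl this, ← Finset.smul_sum, hmin, smul_neg]
  rw [hsplit, hfirst, hsecond, sub_neg_eq_add, ← Finset.sum_range_succ (fun i => u i • α ^ (i+1)) m]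
  rw [Finset.sum_mul]
  refine Finset.sum_congr rfl fun k hk => ?_
  rw [pow_succ, smul_mul_assoc]

theorem crtVec_spec {R : Type*} [CommRing R] (δ : ℕ) (hδ : 0 < δ) (a c : ℕ → ℤ) (α : R)
    (hmin : (∑ k ∈ Finset.range δ, a k • α ^ k) = - α ^ δ) (j : ℕ) :
    (∑ k ∈ Finset.range δ, crtVec δ a c j k • α ^ k) =
      (∑ k ∈ Finset.range δ, c k • α ^ k) * α ^ j := by
  induction j with
  | zero => simp [crtVec]
  | succ j ih =>
    have : crtVec δ a c (j+1) = crtStep δ a (crtVec δ a c j) := rfl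
    rw [this, crtStep_spec δ hδ a _ α hmin, ih, pow_succ, mul_assoc]

/-- Injectivity of the encoding map of the ambient Chinese remainder code
(Theorem 1(1) of the paper): if `𝔭₁,…,𝔭ₙ` are distinct nonzero primes of `𝒪_K`
with `∏ N(𝔭ᵢ) > C_α (M-1)^δ`, where `C_α = δ^{δ/2}(1+S)^{(δ-1)δ/2}`, then
reduction modulo the `𝔭ᵢ` is injective on `𝓡[M] = {∑ zᵢαⁱ : 0 ≤ zᵢ < M}`. -/
theorem crt_code_injective
    (K : Type*) [Field K] [NumberField K] (δ : ℕ)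
    (α : RingOfIntegers K)
    (hgen : Algebra.adjoin ℚ {(α : K)} = ⊤)
    (hδ : Module.finrank ℚ K = δ)
    (S : ℤ) (hS : ∀ i < δ, |(minpoly ℤ (α : K)).coeff i| ≤ S)
    (M : ℤ) (hM : 1 ≤ M)
    (n : ℕ) (𝔭 : Fin n → Ideal (RingOfIntegers K))
    (hprime : ∀ i, (𝔭 i).IsPrime) (hbot : ∀ i, 𝔭 i ≠ ⊥)
    (hdist : Function.Injective 𝔭)
    (hnorm : (∏ i : Fin n, (Ideal.absNorm (𝔭 i) : ℝ)) >
      Real.sqrt δ ^ δ * ((1 + S : ℝ)) ^ ((δ - 1) * δ / 2) * ((M : ℝ) - 1) ^ δ)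
    (z w : Fin δ → ℤ)
    (hz : ∀ i, 0 ≤ z i ∧ z i < M) (hw : ∀ i, 0 ≤ w i ∧ w i < M)
    (heq : ∀ i : Fin n,
      Ideal.Quotient.mk (𝔭 i) (∑ j : Fin δ, (z j : RingOfIntegers K) * α ^ (j : ℕ)) =
      Ideal.Quotient.mk (𝔭 i) (∑ j : Fin δ, (w j : RingOfIntegers K) * α ^ (j : ℕ))) :
    (∑ j : Fin δ, (z j : RingOfIntegers K) * α ^ (j : ℕ)) =
      ∑ j : Fin δ, (w j : RingOfIntegers K) * α ^ (j : ℕ) := by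
  by_contra hne
  -- basic setup
  have hδpos : 0 < δ := hδ ▸ Module.finrank_pos
  have hS0 : 0 ≤ S := (abs_nonneg _).trans (hS 0 hδpos)
  set d : RingOfIntegers K :=
    (∑ j : Fin δ, (z j : RingOfIntegers K) * α ^ (j : ℕ)) -
      ∑ j : Fin δ, (w j : RingOfIntegers K) * α ^ (j : ℕ) with hd
  have hdne : d ≠ 0 := sub_ne_zero.mpr hne
  -- the minimal polynomial
  set p : Polynomial ℤ := minpoly ℤ (α : K) with hp
  have hint : IsIntegral ℤ (α : K) := RingOfIntegers.isIntegral_coe α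
  have hintQ : IsIntegral ℚ (α : K) := IsIntegral.of_finite ℚ _
  -- power basis
  let e : (Algebra.adjoin ℚ ({(α : K)} : Set K)) ≃ₐ[ℚ] K :=
    (Subalgebra.equivOfEq _ _ hgen).trans Subalgebra.topEquiv
  let pb : PowerBasis ℚ K := (Algebra.adjoin.powerBasis hintQ).map e
  have hpbgen : pb.gen = (α : K) := by
    simp [pb, e]
  have hdim : pb.dim = δ := by rw [← pb.finrank, hδ]
  let b : Module.Basis (Fin δ) ℚ K := pb.basis.reindex (finCongr hdim)
  have hb : ∀ i : Fin δ, b i = (α : K) ^ (i : ℕ) := by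
    intro i
    rw [Module.Basis.reindex_apply, pb.coe_basis, hpbgen]
    congr 1
  -- degree of p
  have hpQ : minpoly ℚ (α : K) = p.map (algebraMap ℤ ℚ) :=
    minpoly.isIntegrallyClosed_eq_field_fractions' ℚ hint
  have hdeg : p.natDegree = δ := by
    have h1 : (minpoly ℚ pb.gen).natDegree = pb.dim := pb.natDegree_minpoly
    rw [hpbgen, hpQ] at h1
    rwa [Polynomial.natDegree_map_eq_of_injective
      (algebraMap ℤ ℚ).injective_int, hdim] at h1
  -- coefficients
  set a : ℕ → ℤ := fun k => p.coeff k with ha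
  -- minpoly relation in the ring of integers
  have hminR : minpoly ℤ α = p := by
    rw [hp]
    exact (minpoly.algebraMap_eq RingOfIntegers.coe_injective α).symm
  have hmonic : p.Monic := minpoly.monic hint
  have hminrel : (∑ k ∈ Finset.range δ, a k • α ^ k) = - α ^ δ := by
    have h0 : (Polynomial.aeval α) p = 0 := by
      rw [← hminR]; exact minpoly.aeval ℤ α
    rw [Polynomial.aeval_eq_sum_range, hdeg] at h0
    rw [Finset.sum_range_succ] at h0
    have hlead : p.coeff δ = 1 := by
      have := hmonic.coeff_natDegree
      rwa [hdeg] at this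
    rw [hlead, one_smul] at h0
    linear_combination (norm := module) h0
  -- the coefficient vector
  set c : ℕ → ℤ := fun k => if h : k < δ then z ⟨k, h⟩ - w ⟨k, h⟩ else 0 with hc
  have hcb : ∀ k, |c k| ≤ M - 1 := by
    intro k
    simp only [hc]
    split
    · next h =>
      obtain ⟨h1, h2⟩ := hz ⟨k, h⟩
      obtain ⟨h3, h4⟩ := hw ⟨k, h⟩
      rw [abs_le]; omega
    · simp; omega
  have hd_eq : d = ∑ k ∈ Finset.range δ, c k • α ^ k := by
    rw [hd, ← Finset.sum_sub_distrib]
    rw [← Fin.sum_univ_eq_sum_range (fun k => c k • α ^ k) δ]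
    refine Finset.sum_congr rfl fun j _ => ?_
    rw [hc]
    simp only [j.isLt, dif_pos]
    push_cast [sub_smul, zsmul_eq_mul]
    ring
  -- the matrix
  set v : ℕ → ℕ → ℤ := crtVec δ a c with hv
  set A : Matrix (Fin δ) (Fin δ) ℤ := Matrix.of fun j i => v (j : ℕ) (i : ℕ) with hA
  have hrow : ∀ (j : ℕ), (∑ k ∈ Finset.range δ, v j k • α ^ k) = d * α ^ j := by
    intro j
    rw [hv, crtVec_spec δ hδpos a c α hminrel j, ← hd_eq]
  have hAspec : ∀ j : Fin δ, (d : K) * (α : K) ^ (j : ℕ) = ∑ i : Fin δ, ((A j i : ℚ)) • b i := by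
    intro j
    have := congrArg (algebraMap (RingOfIntegers K) K) (hrow (j : ℕ))
    rw [map_sum, map_mul, map_pow] at this
    rw [← this]
    rw [← Fin.sum_univ_eq_sum_range (fun k => ((v (j:ℕ) k • α ^ k : RingOfIntegers K) : K)) δ]
    refine Finset.sum_congr rfl fun i _ => ?_
    rw [hb i, hA]
    simp only [Matrix.of_apply]
    rw [Int.cast_smul_eq_zsmul ℚ (v (j:ℕ) (i:ℕ)) ((α:K) ^ (i:ℕ))]
    push_cast [zsmul_eq_mul]
    rw [mul_comm]
    norm_cast
    simp [map_mul, mul_comm]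
  -- the norm identity
  have hnormdet : Algebra.norm ℚ ((d : K)) = ((A.det : ℤ) : ℚ) := by
    rw [Algebra.norm_eq_matrix_det b]
    have hmat : Algebra.leftMulMatrix b ((d : K)) =
        ((Int.castRingHom ℚ).mapMatrix A).transpose := by
      ext i j
      rw [Algebra.leftMulMatrix_eq_repr_mul, hb j, hAspec j, b.repr_sum_self]
      simp [RingHom.mapMatrix_apply, Matrix.transpose_apply, Matrix.map_apply]
    rw [hmat, Matrix.det_transpose, ← RingHom.map_det]
    rfl
  have hnormd : Algebra.norm ℤ d = A.det := by
    have : (Algebra.norm ℤ d : ℚ) = ((A.det : ℤ) : ℚ) := by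
      rw [Algebra.coe_norm_int, hnormdet]
    exact_mod_cast this
  -- divisibility
  have hmem : ∀ i, d ∈ 𝔭 i := by
    intro i
    have h := heq i
    rw [Ideal.Quotient.mk_eq_mk_iff_sub_mem] at h
    exact h
  have hmax : ∀ i, (𝔭 i).IsMaximal := fun i => (hprime i).isMaximal (hbot i)
  have hcop : Pairwise (Function.onFun IsCoprime 𝔭) := fun i j hij =>
    Ideal.isCoprime_iff_sup_eq.mpr ((hmax i).coprime_of_ne (hmax j) (fun h => hij (hdist h)))
  have hdvd : (∏ i, 𝔭 i) ∣ Ideal.span {d} :=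
    Fintype.prod_dvd_of_coprime hcop
      (fun i => Ideal.dvd_iff_le.mpr ((Ideal.span_singleton_le_iff_mem _).mpr (hmem i)))
  have hdvdN : (∏ i, Ideal.absNorm (𝔭 i)) ∣ (Algebra.norm ℤ d).natAbs := by
    have h := map_dvd Ideal.absNorm hdvd
    rwa [map_prod, Ideal.absNorm_span_singleton] at h
  have hspan : Ideal.span {d} ≠ ⊥ := by
    simpa [Ideal.span_singleton_eq_bot] using hdne
  have h1 : (Algebra.norm ℤ d).natAbs ≠ 0 := by
    rw [← Ideal.absNorm_span_singleton]
    exact fun h => hspan (Ideal.absNorm_eq_zero_iff.mp h)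
  have hle : (∏ i, Ideal.absNorm (𝔭 i)) ≤ (Algebra.norm ℤ d).natAbs :=
    Nat.le_of_dvd (Nat.pos_of_ne_zero h1) hdvdN
  -- analytic bound
  have hm0 : (0:ℝ) ≤ (M:ℝ) - 1 := by
    have : (1:ℝ) ≤ (M:ℝ) := by exact_mod_cast hM
    linarith
  have ht1 : (1:ℝ) ≤ (1 + S : ℝ) := by
    have : (0:ℝ) ≤ (S:ℝ) := by exact_mod_cast hS0
    linarith
  have hAre : ∀ (i j2 : Fin δ), |((A.map (Int.cast : ℤ → ℝ)) i j2)| ≤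
      ((M:ℝ) - 1) * (1 + S : ℝ) ^ (i : ℕ) := by
    intro i j2
    have h := crtVec_bound δ a c (M - 1) S (by omega) hS0 hcb
      (fun k hk => hS k hk) (i : ℕ) (j2 : ℕ)
    have h2 : (|v (i:ℕ) (j2:ℕ)| : ℝ) ≤ (((M - 1) * (1 + S) ^ (i:ℕ) : ℤ) : ℝ) := by
      exact_mod_cast h
    calc |(A.map (Int.cast : ℤ → ℝ)) i j2| = (|v (i:ℕ) (j2:ℕ)| : ℝ) := by
          simp [hA, Matrix.map_apply, Matrix.of_apply, Int.cast_abs]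
      _ ≤ (((M - 1) * (1 + S) ^ (i:ℕ) : ℤ) : ℝ) := h2
      _ = ((M:ℝ) - 1) * (1 + S : ℝ) ^ (i : ℕ) := by push_cast; ring
  have hdetle := det_le_of_row_le (A.map (Int.cast : ℤ → ℝ)) ((M:ℝ) - 1) ((1 + S : ℝ))
    hm0 ht1 hAre
  have hdetmap : (A.map (Int.cast : ℤ → ℝ)).det = ((A.det : ℤ) : ℝ) := by
    rw [show A.map (Int.cast : ℤ → ℝ) = (Int.castRingHom ℝ).mapMatrix A from rfl,
      ← RingHom.map_det]
    rfl
  have hsum : (∑ i : Fin δ, (i : ℕ)) = (δ - 1) * δ / 2 := by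
    rw [Fin.sum_univ_eq_sum_range (fun i => i) δ, Finset.sum_range_id,
      Nat.mul_comm]
  have hchain : (∏ i : Fin n, (Ideal.absNorm (𝔭 i) : ℝ)) ≤
      Real.sqrt δ ^ δ * ((1 + S : ℝ)) ^ ((δ - 1) * δ / 2) * ((M : ℝ) - 1) ^ δ := by
    calc (∏ i : Fin n, (Ideal.absNorm (𝔭 i) : ℝ))
        = ((∏ i : Fin n, Ideal.absNorm (𝔭 i) : ℕ) : ℝ) := by push_cast; rfl
      _ ≤ (((Algebra.norm ℤ d).natAbs : ℕ) : ℝ) := by exact_mod_cast hle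
      _ = |((A.det : ℤ) : ℝ)| := by rw [hnormd, Nat.cast_natAbs]; push_cast [Int.cast_abs]; ring
      _ = |(A.map (Int.cast : ℤ → ℝ)).det| := by rw [hdetmap]
      _ ≤ (Real.sqrt δ * ((M:ℝ) - 1)) ^ δ * ((1 + S : ℝ)) ^ (∑ i : Fin δ, (i : ℕ)) := hdetle
      _ = Real.sqrt δ ^ δ * ((1 + S : ℝ)) ^ ((δ - 1) * δ / 2) * ((M : ℝ) - 1) ^ δ := by
          rw [hsum, mul_pow]; ring
  linarith [hnorm, hchain]
end

section
/- Let $K$ be a number field of degree $r+1$, $\alpha\in\mathcal{O}_K$ a generator with minimal polynomial coefficient bound $S$ and $C_\alpha=(r+1)^{(r+1)/2}(1+S)^{r(r+1)/2}$. Let $M,s\ge 1$, let $p_1,\ldots,p_\ell$ be totally split primes not dividing $\operatorname{disc}(m_\alpha)$, with prime ideals $\mathfrak{p}_j^{(p_i)}$, $1\le j\le r+1$, above each $p_i$. If $\prod_{i,j}N(\mathfrak{p}_j^{(p_i)})=\prod_{i=1}^\ell p_i^{r+1}>C_\alpha(M^{s+1}-1)^{r+1}$, then the encoding map $\phi:\mathcal{A}[M]\to\prod_{i=1}^\ell\mathbb{F}_{p_i}^{r+1}$,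 $x\mapsto(x\bmod\mathfrak{p}_j^{(p_i)})_{i,j}$, is injective, so the code $\mathcal{C}=\phi(\mathcal{A}[M])$ has size $M^{r(s+1)}$. -/
open Polynomial Finset NumberField

section Aux

open Matrix

lemma trace_eq_sum_eigs {n : ℕ} {A : Matrix (Fin n) (Fin n) ℝ} (hA : A.IsHermitian) :
    A.trace = ∑ i, hA.eigenvalues i := by
  have h := hA.trace_eq_sum_eigenvalues
  simpa using h

/-- Hadamard's inequality, squared form. -/
lemma hadamard_sq {n : ℕ} (A : Matrix (Fin n) (Fin n) ℝ) :
    A.det ^ 2 ≤ ∏ j, ∑ i, A i j ^ 2 := by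
  rcases Nat.eq_zero_or_pos n with hn | hn
  · subst hn; simp [Matrix.det_isEmpty]
  by_cases hz : ∃ j, ∀ i, A i j = 0
  · obtain ⟨j, hj⟩ := hz
    rw [Matrix.det_eq_zero_of_column_eq_zero j hj]
    have : (0:ℝ) ≤ ∏ j, ∑ i, A i j ^ 2 :=
      Finset.prod_nonneg fun j _ => Finset.sum_nonneg fun i _ => sq_nonneg _
    simpa using this
  push_neg at hz
  set d : Fin n → ℝ := fun j => Real.sqrt (∑ i, A i j ^ 2) with hd
  have hdpos : ∀ j, 0 < d j := by
    intro j
    apply Real.sqrt_pos.2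
    obtain ⟨i, hi⟩ := hz j
    have : 0 < A i j ^ 2 := by positivity
    exact Finset.sum_pos' (fun k _ => sq_nonneg _) ⟨i, Finset.mem_univ i, this⟩
  have hdsq : ∀ j, d j ^ 2 = ∑ i, A i j ^ 2 := fun j =>
    Real.sq_sqrt (Finset.sum_nonneg fun i _ => sq_nonneg _)
  set A' : Matrix (Fin n) (Fin n) ℝ := A * Matrix.diagonal (fun j => (d j)⁻¹) with hA'
  have hA'e : ∀ i j, A' i j = A i j * (d j)⁻¹ := fun i j => Matrix.mul_diagonal ..
  set B : Matrix (Fin n) (Fin n) ℝ := A'ᴴ * A' with hB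
  have hBpsd : B.PosSemidef := Matrix.posSemidef_conjTranspose_mul_self A'
  have hBH : B.IsHermitian := hBpsd.1
  have hBdiag : ∀ j, B j j = 1 := by
    intro j
    have h1 : B j j = ∑ i, A' i j * A' i j := by
      simp [hB, Matrix.mul_apply, Matrix.conjTranspose_apply, mul_comm]
    rw [h1]
    have h2 : ∑ i, A' i j * A' i j = (∑ i, A i j ^ 2) * ((d j)⁻¹) ^ 2 := by
      rw [Finset.sum_mul]
      refine Finset.sum_congr rfl fun i _ => ?_
      rw [hA'e]; ring
    rw [h2, ← hdsq j, ← mul_pow, mul_inv_cancel₀ (hdpos j).ne', one_pow]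
  have htr : B.trace = (n : ℝ) := by
    rw [Matrix.trace]
    simp only [Matrix.diag_apply]
    rw [Finset.sum_congr rfl fun j _ => hBdiag j]
    simp
  have hsum : ∑ i, hBH.eigenvalues i = (n : ℝ) := by
    rw [← trace_eq_sum_eigs hBH, htr]
  have hev : ∀ i, 0 ≤ hBH.eigenvalues i := hBpsd.eigenvalues_nonneg
  have hdetB : B.det = ∏ i, hBH.eigenvalues i := by
    have := hBH.det_eq_prod_eigenvalues
    simpa using this
  have hprod : ∏ i, hBH.eigenvalues i ≤ 1 := by
    have hw : ∀ i ∈ Finset.univ (α := Fin n), (0:ℝ) ≤ (n:ℝ)⁻¹ := by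
      intro i _; positivity
    have hw1 : ∑ _i ∈ Finset.univ (α := Fin n), (n:ℝ)⁻¹ = 1 := by
      simp [Finset.sum_const]
      field_simp
    have hgm := Real.geom_mean_le_arith_mean_weighted Finset.univ
      (fun _ => (n:ℝ)⁻¹) hBH.eigenvalues hw hw1 (fun i _ => hev i)
    have h1 : ∑ i, (n:ℝ)⁻¹ * hBH.eigenvalues i = 1 := by
      rw [← Finset.mul_sum, hsum]
      field_simp
    rw [h1] at hgm
    calc ∏ i, hBH.eigenvalues i
        = (∏ i, hBH.eigenvalues i ^ ((n:ℝ)⁻¹)) ^ (n:ℕ) := by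
          rw [← Finset.prod_pow]
          refine Finset.prod_congr rfl fun i _ => ?_
          rw [← Real.rpow_natCast (hBH.eigenvalues i ^ ((n:ℝ)⁻¹)), ← Real.rpow_mul (hev i)]
          rw [inv_mul_cancel₀ (by positivity : (n:ℝ) ≠ 0), Real.rpow_one]
      _ ≤ 1 ^ (n:ℕ) := by
          apply pow_le_pow_left₀ _ hgm
          exact Finset.prod_nonneg fun i _ => Real.rpow_nonneg (hev i) _
      _ = 1 := one_pow n
  have hdetA' : B.det = A'.det ^ 2 := by
    rw [hB, Matrix.det_mul, Matrix.det_conjTranspose]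
    simp [sq]
  have hdet : A.det = A'.det * ∏ j, d j := by
    rw [hA', Matrix.det_mul, Matrix.det_diagonal]
    rw [mul_assoc, ← Finset.prod_mul_distrib]
    have : ∏ j, (d j)⁻¹ * d j = 1 := by
      rw [Finset.prod_congr rfl fun j _ => inv_mul_cancel₀ (hdpos j).ne']
      simp
    rw [this, mul_one]
  calc A.det ^ 2 = A'.det ^ 2 * (∏ j, d j) ^ 2 := by rw [hdet]; ring
    _ ≤ 1 * (∏ j, d j) ^ 2 := by
        apply mul_le_mul_of_nonneg_right _ (sq_nonneg _)
        rw [← hdetA', hdetB]; exact hprod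
    _ = ∏ j, ∑ i, A i j ^ 2 := by
        rw [one_mul, ← Finset.prod_pow]
        exact Finset.prod_congr rfl fun j _ => hdsq j

/-- Uniqueness of bounded base-`M` digits. -/
lemma digits_eq_zero (M : ℤ) (hM : 2 ≤ M) :
    ∀ (n : ℕ) (d : ℕ → ℤ), (∀ t, |d t| < M) →
      (∑ t ∈ Finset.range n, d t * M ^ t = 0) → ∀ t < n, d t = 0 := by
  intro n
  induction n with
  | zero => intro d _ _ t ht; omega
  | succ n ih =>
    intro d hd hsum t ht
    rw [Finset.sum_range_succ'] at hsum
    rw [pow_zero, mul_one] at hsum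
    have hdvd : M ∣ d 0 := by
      have h1 : M ∣ ∑ i ∈ Finset.range n, d (i + 1) * M ^ (i + 1) :=
        Finset.dvd_sum fun i _ => Dvd.dvd.mul_left (dvd_pow_self M (Nat.succ_ne_zero i)) _
      have h2 : d 0 = -(∑ i ∈ Finset.range n, d (i + 1) * M ^ (i + 1)) := by linarith
      rw [h2]
      exact dvd_neg.mpr h1
    have h0 : d 0 = 0 := Int.eq_zero_of_abs_lt_dvd hdvd (hd 0)
    rw [h0, add_zero] at hsum
    have hfac : (∑ i ∈ Finset.range n, d (i + 1) * M ^ i) * M = 0 := by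
      rw [Finset.sum_mul, ← hsum]
      exact Finset.sum_congr rfl fun i _ => by ring
    have hsum' : ∑ i ∈ Finset.range n, d (i + 1) * M ^ i = 0 :=
      (mul_eq_zero.mp hfac).resolve_right (by omega)
    cases t with
    | zero => exact h0
    | succ t => exact ih (fun i => d (i + 1)) (fun i => hd (i + 1)) hsum' t (by omega)

end Aux

set_option maxHeartbeats 1000000 in
/-- Lemma 3 of the paper: if `∏ᵢ pᵢ^{r+1} > C_α (M^{s+1}-1)^{r+1}` with
`C_α = (r+1)^{(r+1)/2}(1+S)^{r(r+1)/2}`, then the encoding map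
`φ : 𝓐[M] → ∏ᵢ 𝔽_{pᵢ}^{r+1}` of the good split code is injective, so the code
`𝒞 = φ(𝓐[M])` has size `M^{r(s+1)}`. -/
theorem split_code_injective
    (K : Type*) [Field K] [NumberField K] (r : ℕ)
    (α : RingOfIntegers K)
    (hgen : Algebra.adjoin ℚ {(α : K)} = ⊤)
    (hδ : Module.finrank ℚ K = r + 1)
    (S : ℤ) (hS : ∀ i < r + 1, |(minpoly ℤ (α : K)).coeff i| ≤ S)
    (M : ℤ) (hM : 1 ≤ M) (s : ℕ) (hs : 1 ≤ s)
    (ℓ : ℕ) (p : Fin ℓ → ℕ) (hp : ∀ i, (p i).Prime)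
    (hpmono : StrictMono p)
    -- each `pᵢ` is totally split in `K/ℚ`, with primes `𝔭 i 1, …, 𝔭 i (r+1)` above it:
    (𝔭 : Fin ℓ → Fin (r + 1) → Ideal (RingOfIntegers K))
    (hprime : ∀ i j, (𝔭 i j).IsPrime)
    (hdist : Function.Injective (fun x : Fin ℓ × Fin (r + 1) => 𝔭 x.1 x.2))
    (hfact : ∀ i, ∏ j : Fin (r + 1), 𝔭 i j = Ideal.span {(p i : RingOfIntegers K)})
    (hresidue : ∀ i j, Ideal.absNorm (𝔭 i j) = p i)
    -- no `pᵢ` divides the discriminant of the minimal polynomial of `α`: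
    (hdisc : ∀ (i : Fin ℓ) (rts : Fin (r + 1) → ℂ) (D : ℤ),
      (minpoly ℤ (α : K)).map (Int.castRingHom ℂ) = ∏ j : Fin (r + 1), (X - C (rts j)) →
      (D : ℂ) = ∏ x ∈ Finset.univ.offDiag, (rts x.1 - rts x.2) →
      ¬ ((p i : ℤ) ∣ D))
    (hnorm : (∏ i : Fin ℓ, (p i : ℝ) ^ (r + 1)) >
      Real.sqrt (r + 1) ^ (r + 1) * ((1 + S : ℝ)) ^ (r * (r + 1) / 2) *
        ((M : ℝ) ^ (s + 1) - 1) ^ (r + 1))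
    (a a' : Fin (s + 1) → Fin r → ℤ)
    (ha : ∀ j i, 0 ≤ a j i ∧ a j i < M) (ha' : ∀ j i, 0 ≤ a' j i ∧ a' j i < M)
    (heq : ∀ (i : Fin ℓ) (j : Fin (r + 1)),
      Ideal.Quotient.mk (𝔭 i j) (∑ t : Fin (s + 1),
        (∑ u : Fin r, (a t u : RingOfIntegers K) * α ^ (u : ℕ)) *
          (M : RingOfIntegers K) ^ (t : ℕ)) =
      Ideal.Quotient.mk (𝔭 i j) (∑ t : Fin (s + 1),
        (∑ u : Fin r, (a' t u : RingOfIntegers K) * α ^ (u : ℕ)) *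
          (M : RingOfIntegers K) ^ (t : ℕ))) :
    a = a' := by
  classical
  rcases Nat.eq_zero_or_pos r with hr0 | hrpos
  · subst hr0; funext t u; exact u.elim0
  rcases eq_or_lt_of_le hM with hM1 | hM1
  · funext t u; have h1 := ha t u; have h2 := ha' t u; omega
  have hS0 : (0:ℤ) ≤ S := le_trans (abs_nonneg _) (hS 0 (by omega))
  -- the power basis of `K` given by powers of `α`
  have hαint : IsIntegral ℚ ((α : K)) := IsIntegral.of_finite ℚ _
  have hαintZ : IsIntegral ℤ ((α : K)) := RingOfIntegers.isIntegral_coe α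
  set pb : PowerBasis ℚ K := (Algebra.adjoin.powerBasis hαint).map
    ((Subalgebra.equivOfEq _ _ hgen).trans Subalgebra.topEquiv) with hpb
  have hpbgen : pb.gen = (α : K) := by
    rw [hpb, PowerBasis.map_gen, Algebra.adjoin.powerBasis_gen]
    rfl
  have hpbdim : pb.dim = r + 1 := by
    have h1 := pb.finrank
    rw [hδ] at h1
    omega
  set b : Module.Basis (Fin (r + 1)) ℚ K := pb.basis.reindex (finCongr hpbdim) with hbdef
  have hb : ∀ i : Fin (r + 1), b i = (α : K) ^ (i : ℕ) := by
    intro i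
    rw [hbdef, Module.Basis.reindex_apply]
    rw [show pb.basis ((finCongr hpbdim).symm i) = pb.gen ^ (((finCongr hpbdim).symm i : Fin pb.dim) : ℕ) from
      congrFun pb.coe_basis _]
    rw [hpbgen]
    congr 1
  -- the minimal polynomial
  set m : ℚ[X] := minpoly ℚ ((α : K)) with hmdef
  have hmZ : m = (minpoly ℤ ((α : K))).map (algebraMap ℤ ℚ) :=
    minpoly.isIntegrallyClosed_eq_field_fractions' ℚ hαintZ
  have hmdeg : m.natDegree = r + 1 := by
    have h1 := pb.natDegree_minpoly
    rw [hpbgen, hpbdim] at h1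
    exact h1
  have hcoeff : ∀ i : Fin (r + 1), |m.coeff (i : ℕ)| ≤ (S : ℚ) := by
    intro i
    have h1 := hS i i.isLt
    rw [hmZ, Polynomial.coeff_map]
    have h2 : ((|(minpoly ℤ ((α : K))).coeff i| : ℤ) : ℚ) ≤ ((S : ℤ) : ℚ) := Int.cast_le.mpr h1
    rw [Int.cast_abs] at h2
    simpa [algebraMap_int_eq] using h2
  have hmonic : m.Monic := minpoly.monic hαint
  have hpow : (α : K) ^ (r + 1) = ∑ i : Fin (r + 1), (-(m.coeff (i : ℕ))) • b i := by
    have h0 := minpoly.aeval ℚ ((α : K))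
    rw [← hmdef, Polynomial.aeval_eq_sum_range, hmdeg, Finset.sum_range_succ] at h0
    have hlc : m.coeff (r + 1) = 1 := by
      have := hmonic.coeff_natDegree
      rwa [hmdeg] at this
    rw [hlc, one_smul] at h0
    have h1 : (α : K) ^ (r + 1) = -∑ i ∈ Finset.range (r + 1), m.coeff i • (α : K) ^ i :=
      eq_neg_of_add_eq_zero_right h0
    rw [h1, ← Finset.sum_neg_distrib,
      ← Fin.sum_univ_eq_sum_range (fun i => -(m.coeff i • (α : K) ^ i)) (r + 1)]
    exact Finset.sum_congr rfl fun i _ => by rw [hb, neg_smul]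
  have hreprpow : ∀ i : Fin (r + 1), b.repr ((α : K) ^ (r + 1)) i = -(m.coeff (i : ℕ)) := by
    intro i
    rw [hpow]
    exact congrFun (b.repr_sum_self _) i
  -- key step: multiplication by α multiplies coordinate bounds by (1+S)
  have key : ∀ (C : ℚ), 0 ≤ C → ∀ w : K, (∀ i, |b.repr w i| ≤ C) →
      ∀ i, |b.repr (w * (α : K)) i| ≤ C * (1 + S) := by
    intro C hC w hw i
    have hw1 : w * (α : K) = ∑ j : Fin (r + 1), b.repr w j • ((α : K) ^ ((j : ℕ) + 1)) := by
      conv_lhs => rw [← b.sum_repr w]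
      rw [Finset.sum_mul]
      exact Finset.sum_congr rfl fun j _ => by rw [hb, smul_mul_assoc, pow_succ]
    have hrepr : b.repr (w * (α : K)) i
        = ∑ j : Fin (r + 1), b.repr w j * b.repr ((α : K) ^ ((j : ℕ) + 1)) i := by
      rw [hw1, map_sum, Finset.sum_apply']
      exact Finset.sum_congr rfl fun j _ => by rw [map_smul, Finsupp.smul_apply, smul_eq_mul]
    have hsum2 : ∑ j : Fin (r + 1), |b.repr ((α : K) ^ ((j : ℕ) + 1)) i| ≤ 1 + (S : ℚ) := by
      rw [Fin.sum_univ_castSucc]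
      have hlast : |b.repr ((α : K) ^ (((Fin.last r : Fin (r + 1)) : ℕ) + 1)) i| ≤ (S : ℚ) := by
        rw [Fin.val_last, hreprpow i, abs_neg]
        exact hcoeff i
      have hcast : ∀ j : Fin r, b.repr ((α : K) ^ (((j.castSucc : Fin (r + 1)) : ℕ) + 1)) i
          = if (j.succ : Fin (r + 1)) = i then 1 else 0 := by
        intro j
        have h1 : (α : K) ^ (((j.castSucc : Fin (r + 1)) : ℕ) + 1) = b j.succ := by
          rw [hb, Fin.val_succ, Fin.coe_castSucc]
        rw [h1, b.repr_self]
        exact Finsupp.single_apply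
      have hmid : ∑ j : Fin r, |b.repr ((α : K) ^ (((j.castSucc : Fin (r + 1)) : ℕ) + 1)) i|
          ≤ 1 := by
        have he : ∑ j : Fin r, |b.repr ((α : K) ^ (((j.castSucc : Fin (r + 1)) : ℕ) + 1)) i|
            = ∑ j : Fin r, (if (j.succ : Fin (r + 1)) = i then (1:ℚ) else 0) :=
          Finset.sum_congr rfl fun j _ => by rw [hcast j]; split_ifs <;> norm_num
        rw [he]
        have hind : ∀ i' : Fin (r + 1),
            ∑ j : Fin r, (if (j.succ : Fin (r + 1)) = i' then (1:ℚ) else 0) ≤ 1 := by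
          intro i'
          induction i' using Fin.cases with
          | zero => simp [Fin.succ_ne_zero]
          | succ k => simp [Fin.succ_inj]
        exact hind i
      exact add_le_add hmid hlast
    calc |b.repr (w * (α : K)) i|
        = |∑ j : Fin (r + 1), b.repr w j * b.repr ((α : K) ^ ((j : ℕ) + 1)) i| := by rw [hrepr]
      _ ≤ ∑ j : Fin (r + 1), |b.repr w j * b.repr ((α : K) ^ ((j : ℕ) + 1)) i| :=
          Finset.abs_sum_le_sum_abs _ _
      _ ≤ ∑ j : Fin (r + 1), C * |b.repr ((α : K) ^ ((j : ℕ) + 1)) i| :=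
          Finset.sum_le_sum fun j _ => by
            rw [abs_mul]
            exact mul_le_mul_of_nonneg_right (hw j) (abs_nonneg _)
      _ = C * ∑ j : Fin (r + 1), |b.repr ((α : K) ^ ((j : ℕ) + 1)) i| := by rw [Finset.mul_sum]
      _ ≤ C * (1 + S) := mul_le_mul_of_nonneg_left hsum2 hC
  -- digit differences
  obtain ⟨d, hdval⟩ : ∃ d : ℕ → Fin r → ℤ, ∀ t u,
      d t u = if h : t < s + 1 then a ⟨t, h⟩ u - a' ⟨t, h⟩ u else 0 := ⟨_, fun _ _ => rfl⟩
  have hdbound : ∀ t u, |d t u| ≤ M - 1 := by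
    intro t u
    rw [hdval]
    split_ifs with h
    · have h1 := ha ⟨t, h⟩ u
      have h2 := ha' ⟨t, h⟩ u
      rw [abs_le]
      omega
    · rw [abs_zero]; omega
  obtain ⟨c, hcval⟩ : ∃ c : Fin r → ℤ, ∀ u,
      c u = ∑ t ∈ Finset.range (s + 1), d t u * M ^ t := ⟨_, fun _ => rfl⟩
  have hcbound : ∀ u, |c u| ≤ M ^ (s + 1) - 1 := by
    intro u
    rw [hcval]
    calc |∑ t ∈ Finset.range (s + 1), d t u * M ^ t|
        ≤ ∑ t ∈ Finset.range (s + 1), |d t u * M ^ t| := Finset.abs_sum_le_sum_abs _ _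
      _ ≤ ∑ t ∈ Finset.range (s + 1), (M - 1) * M ^ t := by
          refine Finset.sum_le_sum fun t _ => ?_
          rw [abs_mul, abs_pow, abs_of_nonneg (by omega : (0:ℤ) ≤ M)]
          exact mul_le_mul_of_nonneg_right (hdbound t u) (pow_nonneg (by omega) t)
      _ = M ^ (s + 1) - 1 := by
          rw [← Finset.mul_sum, mul_comm, geom_sum_mul]
  -- the difference element
  set x₁ : RingOfIntegers K := ∑ t : Fin (s + 1),
    (∑ u : Fin r, (a t u : RingOfIntegers K) * α ^ (u : ℕ)) *
      (M : RingOfIntegers K) ^ (t : ℕ) with hx₁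
  set x₂ : RingOfIntegers K := ∑ t : Fin (s + 1),
    (∑ u : Fin r, (a' t u : RingOfIntegers K) * α ^ (u : ℕ)) *
      (M : RingOfIntegers K) ^ (t : ℕ) with hx₂
  set y : RingOfIntegers K := x₁ - x₂ with hydef
  have hymem : ∀ i j, y ∈ 𝔭 i j := fun i j => (Ideal.Quotient.eq).mp (heq i j)
  have hy : y = ∑ u : Fin r, (c u : RingOfIntegers K) * α ^ (u : ℕ) := by
    have step1 : y = ∑ t : Fin (s + 1), ∑ u : Fin r,
        ((d (t : ℕ) u : RingOfIntegers K) * (M : RingOfIntegers K) ^ (t : ℕ)) * α ^ (u : ℕ) := by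
      rw [hydef, hx₁, hx₂, ← Finset.sum_sub_distrib]
      refine Finset.sum_congr rfl fun t _ => ?_
      rw [← sub_mul, ← Finset.sum_sub_distrib, Finset.sum_mul]
      refine Finset.sum_congr rfl fun u _ => ?_
      have hd' : d (t : ℕ) u = a t u - a' t u := by
        rw [hdval, dif_pos t.isLt]
        try simp only [Fin.eta]
      rw [hd']
      push_cast
      try ring
    rw [step1, Finset.sum_comm]
    refine Finset.sum_congr rfl fun u _ => ?_
    rw [← Finset.sum_mul]
    congr 1
    have h1 : ((c u : ℤ) : RingOfIntegers K)
        = ∑ t ∈ Finset.range (s + 1), (d t u : RingOfIntegers K) * (M : RingOfIntegers K) ^ t := by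
      rw [hcval]
      push_cast
      rfl
    rw [h1, ← Fin.sum_univ_eq_sum_range
      (fun t => (d t u : RingOfIntegers K) * (M : RingOfIntegers K) ^ t) (s + 1)]
  -- divisibility by N
  set N : ℕ := ∏ i, p i with hN
  have hpK : ∀ i : Fin ℓ, ((p i : RingOfIntegers K)) ≠ 0 := by
    intro i
    have := (hp i).pos
    exact Nat.cast_ne_zero.mpr (by omega)
  have hpne_bot : ∀ i j, 𝔭 i j ≠ ⊥ := by
    intro i j hbot
    have hdvd1 : 𝔭 i j ∣ ∏ j', 𝔭 i j' := Finset.dvd_prod_of_mem _ (Finset.mem_univ j)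
    rw [hfact i] at hdvd1
    have hmem1 : ((p i : RingOfIntegers K)) ∈ 𝔭 i j := Ideal.dvd_span_singleton.mp hdvd1
    rw [hbot, Ideal.mem_bot] at hmem1
    exact hpK i hmem1
  have hprimes : ∀ i j, Prime (𝔭 i j) := fun i j =>
    Ideal.prime_of_isPrime (hpne_bot i j) (hprime i j)
  have hNdvdy : ((N : RingOfIntegers K)) ∣ y := by
    have h1 : ∀ P ∈ Finset.univ.image (fun x : Fin ℓ × Fin (r + 1) => 𝔭 x.1 x.2), Prime P := by
      intro P hP
      obtain ⟨x, -, rfl⟩ := Finset.mem_image.mp hP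
      exact hprimes x.1 x.2
    have h2 : ∀ P ∈ Finset.univ.image (fun x : Fin ℓ × Fin (r + 1) => 𝔭 x.1 x.2),
        P ∣ Ideal.span {y} := by
      intro P hP
      obtain ⟨x, -, rfl⟩ := Finset.mem_image.mp hP
      exact Ideal.dvd_span_singleton.mpr (hymem x.1 x.2)
    have h3 := Finset.prod_primes_dvd (Ideal.span {y}) h1 h2
    rw [Finset.prod_image (fun x _ x' _ h => hdist h)] at h3
    have h4 : ∏ x : Fin ℓ × Fin (r + 1), 𝔭 x.1 x.2 = Ideal.span {((N : RingOfIntegers K))} := by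
      rw [Fintype.prod_prod_type]
      rw [Finset.prod_congr rfl fun i (_ : i ∈ Finset.univ) => hfact i]
      rw [Ideal.prod_span_singleton]
      congr 1
      push_cast [hN]
      rfl
    rw [h4] at h3
    exact Ideal.span_singleton_le_span_singleton.mp (Ideal.le_of_dvd h3)
  -- the element in K and its coordinates
  set yK : K := algebraMap (RingOfIntegers K) K y with hyKdef
  have hyKexp : yK = ∑ u : Fin r, ((c u : ℚ)) • ((α : K) ^ (u : ℕ)) := by
    rw [hyKdef, hy, map_sum]
    refine Finset.sum_congr rfl fun u _ => ?_
    rw [map_mul, map_pow, map_intCast, Algebra.smul_def, map_intCast]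
  obtain ⟨e, heval⟩ : ∃ e : Fin (r + 1) → ℚ, ∀ i,
      e i = if h : (i : ℕ) < r then ((c ⟨i, h⟩ : ℚ)) else 0 := ⟨_, fun _ => rfl⟩
  have hyKe : yK = ∑ i : Fin (r + 1), e i • b i := by
    rw [Fin.sum_univ_castSucc]
    have h1 : e (Fin.last r) = 0 := by
      rw [heval]
      simp only [Fin.val_last]
      rw [dif_neg (lt_irrefl r)]
    rw [h1, zero_smul, add_zero, hyKexp]
    refine Finset.sum_congr rfl fun u _ => ?_
    have h2 : e u.castSucc = (c u : ℚ) := by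
      rw [heval, dif_pos (by simpa using u.isLt)]
      try simp only [Fin.coe_castSucc, Fin.eta]
    rw [h2, hb, Fin.coe_castSucc]
  have hrepr_yK : ∀ i, b.repr yK i = e i := by
    intro i
    rw [hyKe]
    exact congrFun (b.repr_sum_self e) i
  -- y must vanish
  have hy0 : y = 0 := by
    by_contra hyne
    obtain ⟨z, hz⟩ := hNdvdy
    -- bounds
    set B : ℚ := (M : ℚ) ^ (s + 1) - 1 with hB
    have hM1Q : (1:ℚ) ≤ (M:ℚ) := by exact_mod_cast (by omega : (1:ℤ) ≤ M)
    have hBnn : 0 ≤ B := by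
      rw [hB]
      have : (1:ℚ) ≤ (M:ℚ) ^ (s + 1) := one_le_pow₀ hM1Q
      linarith
    have hcB : ∀ u, |(c u : ℚ)| ≤ B := by
      intro u
      have h1 := hcbound u
      calc |(c u : ℚ)| = ((|c u| : ℤ) : ℚ) := Int.cast_abs.symm
        _ ≤ ((M ^ (s + 1) - 1 : ℤ) : ℚ) := Int.cast_le.mpr h1
        _ = B := by rw [hB]; push_cast; ring
    set T : ℚ := 1 + (S : ℚ) with hT
    have hTnn : 0 ≤ T := by
      rw [hT]
      have : (0:ℚ) ≤ (S:ℚ) := by exact_mod_cast hS0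
      linarith
    have hcol : ∀ k : ℕ, k ≤ r → ∀ i, |b.repr (yK * (α : K) ^ k) i| ≤ B * T ^ k := by
      intro k
      induction k with
      | zero =>
        intro _ i
        rw [pow_zero, mul_one, pow_zero, mul_one, hrepr_yK, heval]
        split_ifs with h
        · exact hcB _
        · rw [abs_zero]; exact hBnn
      | succ k ih =>
        intro hk i
        have h1 : yK * (α : K) ^ (k + 1) = (yK * (α : K) ^ k) * (α : K) := by ring
        rw [h1]
        have h2 := key (B * T ^ k) (mul_nonneg hBnn (pow_nonneg hTnn k))
          (yK * (α : K) ^ k) (ih (by omega)) i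
        calc |b.repr ((yK * (α : K) ^ k) * (α : K)) i| ≤ (B * T ^ k) * (1 + S) := h2
          _ = B * T ^ (k + 1) := by rw [hT]; ring
    set G : Matrix (Fin (r + 1)) (Fin (r + 1)) ℚ := Algebra.leftMulMatrix b yK with hG
    have hGent : ∀ i k, |G i k| ≤ B * T ^ (k : ℕ) := by
      intro i k
      rw [hG, Algebra.leftMulMatrix_eq_repr_mul, hb]
      exact hcol k (by omega) i
    have hnormdet : Algebra.norm ℚ yK = G.det := Algebra.norm_eq_matrix_det b yK
    set A : Matrix (Fin (r + 1)) (Fin (r + 1)) ℝ := G.map (fun q => (q : ℝ)) with hA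
    have hdetA : A.det = ((G.det : ℚ) : ℝ) := by
      rw [hA, show (fun q : ℚ => (q : ℝ)) = ⇑(Rat.castHom ℝ) from rfl]
      exact (RingHom.map_det (Rat.castHom ℝ) G).symm
    have hcolsum : ∀ k : Fin (r + 1), ∑ i, A i k ^ 2
        ≤ (Real.sqrt (r + 1) * (((B : ℝ)) * ((T : ℝ)) ^ (k : ℕ))) ^ 2 := by
      intro k
      have hBTnn : (0:ℝ) ≤ (B:ℝ) * (T:ℝ) ^ (k:ℕ) := by
        have hb1 : (0:ℝ) ≤ (B:ℝ) := by exact_mod_cast hBnn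
        have hb2 : (0:ℝ) ≤ (T:ℝ) := by exact_mod_cast hTnn
        positivity
      have h1 : ∀ i, A i k ^ 2 ≤ ((B:ℝ) * (T:ℝ) ^ (k:ℕ)) ^ 2 := by
        intro i
        have h2 : |A i k| ≤ (B:ℝ) * (T:ℝ) ^ (k:ℕ) := by
          have h3 := hGent i k
          have h4 : ((|G i k| : ℚ) : ℝ) ≤ (((B * T ^ (k:ℕ)) : ℚ) : ℝ) := Rat.cast_le.mpr h3
          rw [Rat.cast_abs] at h4
          have h5 : A i k = ((G i k : ℚ) : ℝ) := by rw [hA]; rfl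
          rw [h5]
          refine le_trans h4 (le_of_eq ?_)
          push_cast
          ring
        calc A i k ^ 2 = |A i k| ^ 2 := (sq_abs _).symm
          _ ≤ ((B:ℝ) * (T:ℝ) ^ (k:ℕ)) ^ 2 := by
              exact pow_le_pow_left₀ (abs_nonneg _) h2 2
      calc ∑ i, A i k ^ 2 ≤ ∑ _i : Fin (r + 1), ((B:ℝ) * (T:ℝ) ^ (k:ℕ)) ^ 2 :=
            Finset.sum_le_sum fun i _ => h1 i
        _ = (r + 1) * ((B:ℝ) * (T:ℝ) ^ (k:ℕ)) ^ 2 := by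
            rw [Finset.sum_const, Finset.card_univ, Fintype.card_fin]
            push_cast
            ring
        _ = (Real.sqrt (r + 1) * ((B:ℝ) * (T:ℝ) ^ (k:ℕ))) ^ 2 := by
            have hs2 : Real.sqrt ((r:ℝ) + 1) ^ 2 = (r:ℝ) + 1 :=
              Real.sq_sqrt (by positivity)
            conv_rhs => rw [mul_pow]
            rw [hs2]
    have hprodnn : (0:ℝ) ≤ ∏ k : Fin (r + 1), Real.sqrt (r + 1) * ((B:ℝ) * (T:ℝ) ^ (k : ℕ)) := by
      refine Finset.prod_nonneg fun k _ => ?_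
      have hb1 : (0:ℝ) ≤ (B:ℝ) := by exact_mod_cast hBnn
      have hb2 : (0:ℝ) ≤ (T:ℝ) := by exact_mod_cast hTnn
      positivity
    have habs : |A.det| ≤ ∏ k : Fin (r + 1), Real.sqrt (r + 1) * ((B:ℝ) * (T:ℝ) ^ (k : ℕ)) := by
      have h2 : A.det ^ 2 ≤ (∏ k : Fin (r + 1), Real.sqrt (r + 1) * ((B:ℝ) * (T:ℝ) ^ (k:ℕ))) ^ 2 := by
        refine le_trans (hadamard_sq A) ?_
        rw [← Finset.prod_pow]
        exact Finset.prod_le_prod (fun k _ => Finset.sum_nonneg fun i _ => sq_nonneg _)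
          (fun k _ => hcolsum k)
      nlinarith [abs_nonneg A.det, sq_abs A.det]
    have hsumid : ∑ k : Fin (r + 1), (k : ℕ) = r * (r + 1) / 2 := by
      rw [Fin.sum_univ_eq_sum_range (fun k => k) (r + 1), Finset.sum_range_id]
      simp [Nat.mul_comm]
    have hprodeq : ∏ k : Fin (r + 1), Real.sqrt (r + 1) * ((B:ℝ) * (T:ℝ) ^ (k : ℕ))
        = Real.sqrt (r + 1) ^ (r + 1) * ((T:ℝ) ^ (r * (r + 1) / 2) * (B:ℝ) ^ (r + 1)) := by
      rw [Finset.prod_mul_distrib, Finset.prod_const, Finset.card_univ, Fintype.card_fin]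
      rw [Finset.prod_mul_distrib, Finset.prod_const, Finset.card_univ, Fintype.card_fin]
      rw [Finset.prod_pow_eq_pow_sum, hsumid]
      ring
    -- lower bound via the norm
    have hzne : z ≠ 0 := by
      rintro rfl
      rw [mul_zero] at hz
      exact hyne hz
    have hnormy : Algebra.norm ℚ yK = (N : ℚ) ^ (r + 1) * ((Algebra.norm ℤ z : ℤ) : ℚ) := by
      rw [hyKdef, hz, map_mul, _root_.map_mul]
      congr 1
      · have h1 : (algebraMap (RingOfIntegers K) K) ((N : RingOfIntegers K))
            = algebraMap ℚ K ((N : ℚ)) := by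
          rw [map_natCast, map_natCast]
        rw [h1, Algebra.norm_algebraMap, hδ]
      · exact (Algebra.coe_norm_int z).symm
    have hnz : Algebra.norm ℤ z ≠ 0 :=
      (Algebra.norm_ne_zero_iff_of_basis (RingOfIntegers.basis K)).mpr hzne
    have hnzabs : (1:ℚ) ≤ |((Algebra.norm ℤ z : ℤ) : ℚ)| := by
      rw [← Int.cast_abs]
      exact_mod_cast Int.one_le_abs (by exact_mod_cast hnz)
    have hlow : ((N : ℚ)) ^ (r + 1) ≤ |Algebra.norm ℚ yK| := by
      rw [hnormy, abs_mul, abs_pow, abs_of_nonneg (by positivity : (0:ℚ) ≤ (N:ℚ))]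
      calc ((N:ℚ)) ^ (r + 1) = ((N:ℚ)) ^ (r + 1) * 1 := by ring
        _ ≤ ((N:ℚ)) ^ (r + 1) * |((Algebra.norm ℤ z : ℤ) : ℚ)| :=
            mul_le_mul_of_nonneg_left hnzabs (by positivity)
    -- combine
    have hupR : |((Algebra.norm ℚ yK : ℚ) : ℝ)|
        ≤ Real.sqrt (r + 1) ^ (r + 1) * ((1 + (S:ℝ)) ^ (r * (r + 1) / 2))
          * ((M:ℝ) ^ (s + 1) - 1) ^ (r + 1) := by
      have h1 : |((Algebra.norm ℚ yK : ℚ) : ℝ)| = |A.det| := by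
        rw [hdetA, hnormdet]
      rw [h1]
      refine le_trans habs (le_of_eq ?_)
      rw [hprodeq]
      have hTcast : ((T : ℚ) : ℝ) = 1 + (S:ℝ) := by rw [hT]; push_cast; ring
      have hBcast : ((B : ℚ) : ℝ) = (M:ℝ) ^ (s + 1) - 1 := by rw [hB]; push_cast; ring
      rw [hTcast, hBcast]
      ring
    have hlowR : ((N : ℝ)) ^ (r + 1) ≤ |((Algebra.norm ℚ yK : ℚ) : ℝ)| := by
      rw [← Rat.cast_abs]
      exact_mod_cast hlow
    have hNcast : ((N : ℝ)) ^ (r + 1) = ∏ i, (p i : ℝ) ^ (r + 1) := by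
      rw [hN]
      push_cast
      rw [← Finset.prod_pow]
    rw [hNcast] at hlowR
    have := hnorm
    linarith
  -- conclude
  have hcz : ∀ u : Fin r, c u = 0 := by
    intro u
    have h1 : yK = 0 := by rw [hyKdef, hy0, map_zero]
    have h2 := hrepr_yK u.castSucc
    rw [h1] at h2
    simp only [map_zero, Finsupp.coe_zero, Pi.zero_apply] at h2
    have h3 : e u.castSucc = (c u : ℚ) := by
      rw [heval, dif_pos (by simpa using u.isLt)]
      try simp only [Fin.coe_castSucc, Fin.eta]
    rw [h3] at h2
    exact_mod_cast h2.symm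
  funext t u
  have hdz := digits_eq_zero M (by omega) (s + 1) (fun t' => d t' u)
    (fun t' => lt_of_le_of_lt (hdbound t' u) (by omega))
    ((hcval u).symm.trans (hcz u)) t t.isLt
  have h4 : a t u - a' t u = 0 := by
    have hdz' : d (t : ℕ) u = 0 := hdz
    rw [hdval, dif_pos t.isLt] at hdz'
    simpa only [Fin.eta] using hdz'
  omega
end
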